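/- arXiv:2310.20397 — 7 statements merged into one kernel-verified Lean document; each statement's English description precedes it below -/
import Mathlib

section
/- Let G ⊆ E and suppose T_1 (the blockwise map using all blocks) is a$\alpha$-fne on G with constant ᾱ ∈ (0,1) and violation at most ε̄ ∈ [0,1). Then the family (T_i)_{i∈𝕀} is a$\alpha$-fne in expectation with respect to the weighted norm ‖·‖_p with constant ᾱ and violation at most p̄ε̄: for all x, y ∈ G, Σ_{i∈𝕀} η_i ‖T_i x − T_i y‖_p² ≤ (1 + p̄ε̄)‖x − y‖_p² − ((1−ᾱ)/ᾱ) Σ_{i∈𝕀} η_i ‖(x − T_i x) − (y − T_i y)‖_p². -/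
open Finset
open scoped RealInnerProductSpace

noncomputable section

variable {m : ℕ} {I : Type*} [Fintype I]
variable {E : Fin m → Type*} [∀ j, NormedAddCommGroup (E j)]
  [∀ j, InnerProductSpace ℝ (E j)] [∀ j, FiniteDimensional ℝ (E j)]

/-- The blockwise map `T_i`: applies `T'_j` on the blocks `j ∈ M i`, identity elsewhere. -/
def blockMap (M : I → Finset (Fin m)) (T' : ∀ j, PiLp 2 E → E j)
    (i : I) (x : PiLp 2 E) : PiLp 2 E :=
  WithLp.toLp 2 (fun j => if j ∈ M i then T' j x else x j)

/-- The squared weighted norm `‖z‖_p²  =  ∑ⱼ pⱼ⁻¹ ‖zⱼ‖²`. -/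
def wNormSq (pw : Fin m → ℝ) (z : PiLp 2 E) : ℝ :=
  ∑ j, (pw j)⁻¹ * ‖z j‖ ^ 2

/-- The weighted norm `‖z‖_p`. -/
def wNorm (pw : Fin m → ℝ) (z : PiLp 2 E) : ℝ :=
  Real.sqrt (wNormSq pw z)

/-- if `T₁` is aα-fne on `G` with constant `α` and violation at most `ε`, then the
family `(T_i)` is aα-fne in expectation w.r.t. the weighted norm with constant `α` and violation
at most `p̄ ε`. -/
theorem statement1
    (M : I → Finset (Fin m)) (hM : ∀ i, (M i).Nonempty)
    (i₁ : I) (hi₁ : M i₁ = Finset.univ)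
    (η : I → ℝ) (hη : ∀ i, 0 ≤ η i) (hηsum : ∑ i : I, η i = 1)
    (pw : Fin m → ℝ) (hpw : ∀ j, pw j = ∑ i : I, if j ∈ M i then η i else 0)
    (hp : ∀ j, 0 < pw j)
    (pbar : ℝ) (hpbar : IsGreatest (Set.range pw) pbar)
    (T' : ∀ j, PiLp 2 E → E j)
    (G : Set (PiLp 2 E))
    (α ε : ℝ) (hα : α ∈ Set.Ioo (0 : ℝ) 1) (hε : ε ∈ Set.Ico (0 : ℝ) 1)
    (hT1 : ∀ x ∈ G, ∀ y ∈ G,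
      ‖blockMap M T' i₁ x - blockMap M T' i₁ y‖ ^ 2
        ≤ (1 + ε) * ‖x - y‖ ^ 2
          - ((1 - α) / α) * ‖(x - blockMap M T' i₁ x) - (y - blockMap M T' i₁ y)‖ ^ 2) :
    ∀ x ∈ G, ∀ y ∈ G,
      ∑ i : I, η i * wNormSq pw (blockMap M T' i x - blockMap M T' i y)
        ≤ (1 + pbar * ε) * wNormSq pw (x - y)
          - ((1 - α) / α) *
              ∑ i : I, η i *
                wNormSq pw ((x - blockMap M T' i x) - (y - blockMap M T' i y)) := by
  intro x hx y hy
  obtain ⟨hα0, hα1⟩ := hα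
  obtain ⟨hε0, -⟩ := hε
  have hκ : (0:ℝ) ≤ (1 - α) / α := div_nonneg (by linarith) hα0.le
  set A : Fin m → ℝ := fun j => ‖T' j x - T' j y‖ ^ 2 with hA
  set B : Fin m → ℝ := fun j => ‖x j - y j‖ ^ 2 with hB
  set C : Fin m → ℝ := fun j => ‖(x j - T' j x) - (y j - T' j y)‖ ^ 2 with hC
  have hdiff : ∀ i j, (blockMap M T' i x - blockMap M T' i y) j
      = (if j ∈ M i then T' j x - T' j y else x j - y j) := by
    intro i j
    have h0 : (blockMap M T' i x - blockMap M T' i y) j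
        = (blockMap M T' i x) j - (blockMap M T' i y) j := rfl
    rw [h0]
    by_cases h : j ∈ M i <;> simp [blockMap, h]
  have hres : ∀ i j, ((x - blockMap M T' i x) - (y - blockMap M T' i y)) j
      = (if j ∈ M i then (x j - T' j x) - (y j - T' j y) else 0) := by
    intro i j
    have h0 : ((x - blockMap M T' i x) - (y - blockMap M T' i y)) j
        = (x j - (blockMap M T' i x) j) - (y j - (blockMap M T' i y) j) := rfl
    rw [h0]
    by_cases h : j ∈ M i <;> simp [blockMap, h]
  have hw1 : ∀ i, wNormSq pw (blockMap M T' i x - blockMap M T' i y)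
      = ∑ j, (pw j)⁻¹ * (if j ∈ M i then A j else B j) := by
    intro i
    refine Finset.sum_congr rfl fun j _ => ?_
    rw [hdiff]
    split_ifs <;> rfl
  have hw2 : ∀ i, wNormSq pw ((x - blockMap M T' i x) - (y - blockMap M T' i y))
      = ∑ j, (pw j)⁻¹ * (if j ∈ M i then C j else 0) := by
    intro i
    refine Finset.sum_congr rfl fun j _ => ?_
    rw [hres]
    split_ifs
    · rfl
    · simp
  have swap : ∀ F : I → Fin m → ℝ,
      ∑ i, η i * ∑ j, (pw j)⁻¹ * F i j = ∑ j, (pw j)⁻¹ * ∑ i, η i * F i j := by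
    intro F
    simp_rw [Finset.mul_sum]
    rw [Finset.sum_comm]
    exact Finset.sum_congr rfl fun j _ => Finset.sum_congr rfl fun i _ => by ring
  have h2 : ∀ j, ∑ i : I, (if j ∈ M i then (0:ℝ) else η i) = 1 - pw j := by
    intro j
    have e : ∀ i : I, (if j ∈ M i then (0:ℝ) else η i)
        = η i - (if j ∈ M i then η i else 0) := by
      intro i; split_ifs <;> ring
    simp_rw [e]
    rw [Finset.sum_sub_distrib, hηsum, ← hpw]
  have hsum1 : ∀ j, ∑ i, η i * (if j ∈ M i then A j else B j)
      = pw j * A j + (1 - pw j) * B j := by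
    intro j
    have e : ∀ i : I, η i * (if j ∈ M i then A j else B j)
        = (if j ∈ M i then η i else 0) * A j + (if j ∈ M i then (0:ℝ) else η i) * B j := by
      intro i; split_ifs <;> ring
    simp_rw [e]
    rw [Finset.sum_add_distrib, ← Finset.sum_mul, ← Finset.sum_mul, ← hpw, h2]
  have hsum2 : ∀ j, ∑ i, η i * (if j ∈ M i then C j else 0) = pw j * C j := by
    intro j
    have e : ∀ i : I, η i * (if j ∈ M i then C j else 0)
        = (if j ∈ M i then η i else 0) * C j := by
      intro i; split_ifs <;> ring
    simp_rw [e]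
    rw [← Finset.sum_mul, ← hpw]
  set SA := ∑ j, A j
  set SB := ∑ j, B j
  set SC := ∑ j, C j
  set SwB := ∑ j, (pw j)⁻¹ * B j with hSwB
  have E1 : ∑ i : I, η i * wNormSq pw (blockMap M T' i x - blockMap M T' i y)
      = SA + (SwB - SB) := by
    simp_rw [hw1]
    rw [swap]
    have e : ∀ j : Fin m, (pw j)⁻¹ * (∑ i, η i * (if j ∈ M i then A j else B j))
        = A j + ((pw j)⁻¹ * B j - B j) := by
      intro j
      rw [hsum1 j, mul_add, ← mul_assoc, inv_mul_cancel₀ (hp j).ne', one_mul,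
        sub_mul, one_mul, mul_sub, ← mul_assoc, inv_mul_cancel₀ (hp j).ne', one_mul]
    rw [Finset.sum_congr rfl fun j _ => e j, Finset.sum_add_distrib,
      Finset.sum_sub_distrib]
  have E2 : ∑ i : I, η i * wNormSq pw ((x - blockMap M T' i x) - (y - blockMap M T' i y))
      = SC := by
    simp_rw [hw2]
    rw [swap]
    refine Finset.sum_congr rfl fun j _ => ?_
    rw [hsum2 j]
    rw [← mul_assoc, inv_mul_cancel₀ (hp j).ne', one_mul]
  have E3 : wNormSq pw (x - y) = SwB := rfl
  have hT1' : SA ≤ (1 + ε) * SB - (1 - α) / α * SC := by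
    have h := hT1 x hx y hy
    have e1 : ‖blockMap M T' i₁ x - blockMap M T' i₁ y‖ ^ 2 = SA := by
      rw [PiLp.norm_sq_eq_of_L2]
      refine Finset.sum_congr rfl fun j _ => ?_
      rw [hdiff, hi₁]
      simp [hA]
    have e2 : ‖x - y‖ ^ 2 = SB := by
      rw [PiLp.norm_sq_eq_of_L2]
      exact Finset.sum_congr rfl fun j _ => rfl
    have e3 : ‖(x - blockMap M T' i₁ x) - (y - blockMap M T' i₁ y)‖ ^ 2 = SC := by
      rw [PiLp.norm_sq_eq_of_L2]
      refine Finset.sum_congr rfl fun j _ => ?_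
      rw [hres, hi₁]
      simp [hC]
    rw [e1, e2, e3] at h
    exact h
  have key : ε * SB ≤ pbar * ε * SwB := by
    rw [hSwB, Finset.mul_sum, Finset.mul_sum]
    refine Finset.sum_le_sum fun j _ => ?_
    have hle : pw j ≤ pbar := hpbar.2 (Set.mem_range_self j)
    have hBj : (0:ℝ) ≤ B j := by positivity
    have h1 : 1 ≤ pbar * (pw j)⁻¹ := by
      rw [← div_eq_mul_inv, le_div_iff₀ (hp j), one_mul]
      exact hle
    calc ε * B j = 1 * (ε * B j) := by ring
      _ ≤ (pbar * (pw j)⁻¹) * (ε * B j) :=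
          mul_le_mul_of_nonneg_right h1 (by positivity)
      _ = pbar * ε * ((pw j)⁻¹ * B j) := by ring
  rw [E1, E2, E3]
  nlinarith [hT1', key]
end
end

section
/- For all x, y ∈ E, the weighted second moment of the blockwise updates satisfies the exact identity Σ_{i∈𝕀} η_i ‖T_i x − T_i y‖_p² = ‖T_1 x − T_1 y‖² − ‖x − y‖² + ‖x − y‖_p², where T_1 x = (T'_1(x),…,T'_m(x)) is the map using all blocks. -/
open Finset
open scoped RealInnerProductSpace

noncomputable section

variable {m : ℕ} {I : Type*} [Fintype I]
variable {E : Fin m → Type*} [∀ j, NormedAddCommGroup (E j)]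
  [∀ j, InnerProductSpace ℝ (E j)] [∀ j, FiniteDimensional ℝ (E j)]

/-- exact identity for the expected squared weighted distance of blockwise updates:
`∑ᵢ ηᵢ ‖Tᵢx − Tᵢy‖_p² = ‖T₁x − T₁y‖² − ‖x−y‖² + ‖x−y‖_p²`. -/
theorem statement2
    (M : I → Finset (Fin m)) (hM : ∀ i, (M i).Nonempty)
    (i₁ : I) (hi₁ : M i₁ = Finset.univ)
    (η : I → ℝ) (hη : ∀ i, 0 ≤ η i) (hηsum : ∑ i : I, η i = 1)
    (pw : Fin m → ℝ) (hpw : ∀ j, pw j = ∑ i : I, if j ∈ M i then η i else 0)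
    (hp : ∀ j, 0 < pw j)
    (T' : ∀ j, PiLp 2 E → E j) :
    ∀ x y : PiLp 2 E,
      ∑ i : I, η i * wNormSq pw (blockMap M T' i x - blockMap M T' i y)
        = ‖blockMap M T' i₁ x - blockMap M T' i₁ y‖ ^ 2 - ‖x - y‖ ^ 2
            + wNormSq pw (x - y) := by
  intro x y
  have hsq : ∀ z : PiLp 2 E, ‖z‖ ^ 2 = ∑ j, ‖z j‖ ^ 2 := fun z => by
    rw [PiLp.norm_sq_eq_of_L2]
  have happ : ∀ i j, (blockMap M T' i x - blockMap M T' i y) j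
      = if j ∈ M i then T' j x - T' j y else x j - y j := by
    intro i j
    simp only [PiLp.sub_apply, blockMap]
    split <;> rfl
  calc ∑ i : I, η i * wNormSq pw (blockMap M T' i x - blockMap M T' i y)
      = ∑ j, (pw j)⁻¹ * ∑ i : I, η i *
          (if j ∈ M i then ‖T' j x - T' j y‖ ^ 2 else ‖x j - y j‖ ^ 2) := by
        unfold wNormSq
        simp only [Finset.mul_sum]
        rw [Finset.sum_comm]
        refine Finset.sum_congr rfl fun j _ => ?_
        refine Finset.sum_congr rfl fun i _ => ?_
        rw [happ]
        split <;> ring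
    _ = ∑ j, (pw j)⁻¹ * (pw j * ‖T' j x - T' j y‖ ^ 2
          + (1 - pw j) * ‖x j - y j‖ ^ 2) := by
        refine Finset.sum_congr rfl fun j _ => ?_
        congr 1
        have : ∑ i : I, η i * (if j ∈ M i then ‖T' j x - T' j y‖ ^ 2 else ‖x j - y j‖ ^ 2)
            = ∑ i : I, ((if j ∈ M i then η i else 0) * ‖T' j x - T' j y‖ ^ 2
              + (η i - if j ∈ M i then η i else 0) * ‖x j - y j‖ ^ 2) := by
          refine Finset.sum_congr rfl fun i _ => ?_
          split <;> ring
        rw [this, Finset.sum_add_distrib, ← Finset.sum_mul, ← Finset.sum_mul,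
          Finset.sum_sub_distrib, hηsum, ← hpw]
    _ = ∑ j, (‖T' j x - T' j y‖ ^ 2 - ‖x j - y j‖ ^ 2 + (pw j)⁻¹ * ‖x j - y j‖ ^ 2) := by
        refine Finset.sum_congr rfl fun j _ => ?_
        have h : (pw j)⁻¹ * pw j = 1 := inv_mul_cancel₀ (hp j).ne'
        linear_combination (‖T' j x - T' j y‖ ^ 2 - ‖x j - y j‖ ^ 2) * h
    _ = _ := by
        rw [Finset.sum_add_distrib, Finset.sum_sub_distrib, hsq, hsq]
        unfold wNormSq
        simp only [happ, hi₁, Finset.mem_univ, if_true, PiLp.sub_apply]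
end
end

section
/- For all x, y ∈ E, the expected weighted transport discrepancy of the blockwise updates satisfies the exact identity Σ_{i∈𝕀} η_i ‖(x − T_i x) − (y − T_i y)‖_p² = ‖(x − T_1 x) − (y − T_1 y)‖², where T_1 x = (T'_1(x),…,T'_m(x)) is the map using all blocks. -/
open Finset
open scoped RealInnerProductSpace

noncomputable section

variable {m : ℕ} {I : Type*} [Fintype I]
variable {E : Fin m → Type*} [∀ j, NormedAddCommGroup (E j)]
  [∀ j, InnerProductSpace ℝ (E j)] [∀ j, FiniteDimensional ℝ (E j)]

/-- exact identity for the expected weighted transport discrepancy: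
`∑ᵢ ηᵢ ‖(x−Tᵢx) − (y−Tᵢy)‖_p² = ‖(x−T₁x) − (y−T₁y)‖²`. -/
theorem statement3
    (M : I → Finset (Fin m)) (hM : ∀ i, (M i).Nonempty)
    (i₁ : I) (hi₁ : M i₁ = Finset.univ)
    (η : I → ℝ) (hη : ∀ i, 0 ≤ η i) (hηsum : ∑ i : I, η i = 1)
    (pw : Fin m → ℝ) (hpw : ∀ j, pw j = ∑ i : I, if j ∈ M i then η i else 0)
    (hp : ∀ j, 0 < pw j)
    (T' : ∀ j, PiLp 2 E → E j) :
    ∀ x y : PiLp 2 E,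
      ∑ i : I, η i * wNormSq pw ((x - blockMap M T' i x) - (y - blockMap M T' i y))
        = ‖(x - blockMap M T' i₁ x) - (y - blockMap M T' i₁ y)‖ ^ 2 := by
  intro x y
  set w : ∀ j, E j := fun j => (x j - T' j x) - (y j - T' j y) with hw
  have happ : ∀ i j, ((x - blockMap M T' i x) - (y - blockMap M T' i y)) j
      = if j ∈ M i then w j else 0 := by
    intro i j
    simp only [PiLp.sub_apply, blockMap, PiLp.toLp_apply, hw]
    split <;> abel
  have hsq : ∀ i, wNormSq pw ((x - blockMap M T' i x) - (y - blockMap M T' i y))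
      = ∑ j, if j ∈ M i then (pw j)⁻¹ * ‖w j‖ ^ 2 else 0 := by
    intro i
    unfold wNormSq
    refine Finset.sum_congr rfl fun j _ => ?_
    rw [happ]
    split <;> simp
  calc ∑ i : I, η i * wNormSq pw ((x - blockMap M T' i x) - (y - blockMap M T' i y))
      = ∑ i : I, ∑ j, if j ∈ M i then η i * ((pw j)⁻¹ * ‖w j‖ ^ 2) else 0 := by
        refine Finset.sum_congr rfl fun i _ => ?_
        rw [hsq, Finset.mul_sum]
        exact Finset.sum_congr rfl fun j _ => by split <;> simp
    _ = ∑ j, (∑ i : I, if j ∈ M i then η i else 0) * ((pw j)⁻¹ * ‖w j‖ ^ 2) := by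
        rw [Finset.sum_comm]
        refine Finset.sum_congr rfl fun j _ => ?_
        rw [Finset.sum_mul]
        exact Finset.sum_congr rfl fun i _ => by split <;> simp
    _ = ∑ j, ‖w j‖ ^ 2 := by
        refine Finset.sum_congr rfl fun j _ => ?_
        rw [← hpw j, ← mul_assoc, mul_inv_cancel₀ (hp j).ne', one_mul]
    _ = ‖(x - blockMap M T' i₁ x) - (y - blockMap M T' i₁ y)‖ ^ 2 := by
        rw [PiLp.norm_sq_eq_of_L2]
        refine Finset.sum_congr rfl fun j _ => ?_
        rw [happ, hi₁]
        simp
end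
end

section
/- Let G ⊆ E, suppose T_1 (the blockwise map using all blocks) is α-fne on G with constant ᾱ ∈ (0,1) and violation 0, and suppose the set of common fixed points C := {x ∈ G : T_i x = x for every i ∈ 𝕀 with η_i > 0} is nonempty. Then the family (T_i)_{i∈𝕀} is a paracontraction in expectation with respect to the weighted norm: for every y ∈ C and every x ∈ G \ C, Σ_{i∈𝕀} η_i ‖T_i x − T_i y‖_p² < ‖x − y‖_p². -/
open Finset
open scoped RealInnerProductSpace

noncomputable section

variable {m : ℕ} {I : Type*} [Fintype I]
variable {E : Fin m → Type*} [∀ j, NormedAddCommGroup (E j)]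
  [∀ j, InnerProductSpace ℝ (E j)] [∀ j, FiniteDimensional ℝ (E j)]

/-- if `T₁` is α-fne on `G` (no violation) and the common fixed point set `C` is
nonempty, then the family `(T_i)` is a paracontraction in expectation w.r.t. the weighted norm. -/
theorem statement4
    (M : I → Finset (Fin m)) (hM : ∀ i, (M i).Nonempty)
    (i₁ : I) (hi₁ : M i₁ = Finset.univ)
    (η : I → ℝ) (hη : ∀ i, 0 ≤ η i) (hηsum : ∑ i : I, η i = 1)
    (pw : Fin m → ℝ) (hpw : ∀ j, pw j = ∑ i : I, if j ∈ M i then η i else 0)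
    (hp : ∀ j, 0 < pw j)
    (T' : ∀ j, PiLp 2 E → E j)
    (G : Set (PiLp 2 E))
    (α : ℝ) (hα : α ∈ Set.Ioo (0 : ℝ) 1)
    (hT1 : ∀ x ∈ G, ∀ y ∈ G,
      ‖blockMap M T' i₁ x - blockMap M T' i₁ y‖ ^ 2
        ≤ ‖x - y‖ ^ 2
          - ((1 - α) / α) * ‖(x - blockMap M T' i₁ x) - (y - blockMap M T' i₁ y)‖ ^ 2)
    (C : Set (PiLp 2 E))
    (hC : C = {x ∈ G | ∀ i, 0 < η i → blockMap M T' i x = x})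
    (hCne : C.Nonempty) :
    ∀ y ∈ C, ∀ x ∈ G \ C,
      ∑ i : I, η i * wNormSq pw (blockMap M T' i x - blockMap M T' i y)
        < wNormSq pw (x - y) := by
  obtain ⟨hα0, hα1⟩ := hα
  intro y hy x hx
  obtain ⟨hxG, hxC⟩ := hx
  rw [hC] at hy hxC
  obtain ⟨hyG, hyfix⟩ := hy
  have hy' : ∀ j, T' j y = y j := by
    intro j
    obtain ⟨i, hji, hηi⟩ : ∃ i, j ∈ M i ∧ 0 < η i := by
      by_contra h
      push_neg at h
      have h0 : pw j = 0 := by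
        rw [hpw]
        refine Finset.sum_eq_zero fun i _ => ?_
        by_cases hmi : j ∈ M i
        · have h1 : η i = 0 := le_antisymm (h i hmi) (hη i)
          simp [hmi, h1]
        · simp [hmi]
      exact absurd h0 (hp j).ne'
    have h1 := congrFun (congrArg WithLp.ofLp (hyfix i hηi)) j
    simpa [blockMap, hji] using h1
  have hfix1 : blockMap M T' i₁ y = y := by
    ext j
    simp [blockMap, hi₁, hy' j]
  have hxne : blockMap M T' i₁ x ≠ x := by
    intro heq
    have hall : ∀ j, T' j x = x j := fun j => by
      have h1 := congrFun (congrArg WithLp.ofLp heq) j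
      simpa [blockMap, hi₁] using h1
    refine hxC (Set.mem_sep hxG fun i _ => PiLp.ext fun j => ?_)
    by_cases hji : j ∈ M i <;> simp [blockMap, hji, hall j]
  have hAle : (∑ j, ‖T' j x - y j‖ ^ 2)
      ≤ ‖x - y‖ ^ 2 - ((1 - α) / α) * ‖x - blockMap M T' i₁ x‖ ^ 2 := by
    have h := hT1 x hxG y hyG
    rw [hfix1] at h
    have hnorm : ‖blockMap M T' i₁ x - y‖ ^ 2 = ∑ j, ‖T' j x - y j‖ ^ 2 := by
      rw [PiLp.norm_sq_eq_of_L2]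
      refine Finset.sum_congr rfl fun j _ => ?_
      simp [PiLp.sub_apply, blockMap, hi₁]
    rw [hnorm] at h
    simpa using h
  have hBnorm : ‖x - y‖ ^ 2 = ∑ j, ‖(x - y) j‖ ^ 2 := PiLp.norm_sq_eq_of_L2 _ _
  have hterm : ∀ i j, ‖(blockMap M T' i x - blockMap M T' i y) j‖ ^ 2
      = if j ∈ M i then ‖T' j x - y j‖ ^ 2 else ‖(x - y) j‖ ^ 2 := by
    intro i j
    by_cases hji : j ∈ M i <;>
      simp [PiLp.sub_apply, blockMap, hji, hy' j]
  have key : ∑ i : I, η i * wNormSq pw (blockMap M T' i x - blockMap M T' i y)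
      = (∑ j, ‖T' j x - y j‖ ^ 2) + (wNormSq pw (x - y) - ‖x - y‖ ^ 2) := by
    unfold wNormSq
    rw [hBnorm]
    simp only [Finset.mul_sum]
    rw [Finset.sum_comm]
    rw [← Finset.sum_sub_distrib, ← Finset.sum_add_distrib]
    refine Finset.sum_congr rfl fun j _ => ?_
    have hsplit : ∀ i, η i * ((pw j)⁻¹ * ‖(blockMap M T' i x - blockMap M T' i y) j‖ ^ 2)
        = (if j ∈ M i then η i else 0) * ((pw j)⁻¹ * ‖T' j x - y j‖ ^ 2)
          + (if j ∈ M i then 0 else η i) * ((pw j)⁻¹ * ‖(x - y) j‖ ^ 2) := by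
      intro i
      rw [hterm]
      by_cases hji : j ∈ M i <;> simp [hji]
    rw [Finset.sum_congr rfl (fun i _ => hsplit i), Finset.sum_add_distrib,
      ← Finset.sum_mul, ← Finset.sum_mul]
    have hs1 : ∑ i, (if j ∈ M i then η i else 0) = pw j := (hpw j).symm
    have hs2 : ∑ i, (if j ∈ M i then (0 : ℝ) else η i) = 1 - pw j := by
      have h1 : ∑ i, ((if j ∈ M i then η i else 0) + (if j ∈ M i then (0 : ℝ) else η i)) = 1 := by
        rw [← hηsum]
        refine Finset.sum_congr rfl fun i _ => ?_
        by_cases hji : j ∈ M i <;> simp [hji]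
      rw [Finset.sum_add_distrib, hs1] at h1
      linarith
    rw [hs1, hs2]
    have hpj := (hp j).ne'
    field_simp
  rw [key]
  have hpos : 0 < ((1 - α) / α) * ‖x - blockMap M T' i₁ x‖ ^ 2 := by
    refine mul_pos (div_pos (by linarith) hα0) ?_
    have h0 : x - blockMap M T' i₁ x ≠ 0 := sub_ne_zero.mpr hxne.symm
    exact pow_pos (norm_pos_iff.mpr h0) 2
  linarith
end
end

section
/- Let G ⊆ E be convex, suppose each T'_j is a Borel measurable self-map consistent with G (each T_i maps G to G), and suppose T_1 (the blockwise map using all blocks) is a$\alpha$-fne on G with constant ᾱ ∈ (0,1) and violation at most ε̄ ∈ [0,1). Then the Markov operator 𝒫 is a$\alpha$-fne in measure with constant ᾱ and violation at most p̄ε̄: for all μ₁, μ₂ ∈ 𝒫₂(G) and every optimal coupling γ of (μ₁, μ₂) with respect to d_{W2,p}, one has d_{W2,p}(μ₁𝒫, μ₂𝒫)² ≤ (1 + p̄ε̄) d_{W2,p}(μ₁, μ₂)² − ((1−ᾱ)/ᾱ) ∫ Σ_{i∈𝕀} η_i ψ_p(x, y, T_i x, T_i y) dγ(x,y). -/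
open Finset MeasureTheory Filter
open scoped RealInnerProductSpace

noncomputable section

variable {m : ℕ} {I : Type*} [Fintype I]
variable {E : Fin m → Type*} [∀ j, NormedAddCommGroup (E j)]
  [∀ j, InnerProductSpace ℝ (E j)] [∀ j, FiniteDimensional ℝ (E j)]
variable [∀ j, MeasurableSpace (E j)] [∀ j, BorelSpace (E j)]
variable [MeasurableSpace (PiLp 2 E)] [BorelSpace (PiLp 2 E)]

/-- `γ` is a coupling of `μ` and `ν`. -/
def IsCoupling (γ : Measure (PiLp 2 E × PiLp 2 E)) (μ ν : Measure (PiLp 2 E)) : Prop :=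
  IsProbabilityMeasure γ ∧ γ.map Prod.fst = μ ∧ γ.map Prod.snd = ν

/-- The transport cost `(∫ ‖x−y‖_p² dγ)^{1/2}` of a coupling `γ`. -/
def couplingCost (pw : Fin m → ℝ) (γ : Measure (PiLp 2 E × PiLp 2 E)) : ℝ :=
  Real.sqrt (∫ z, wNormSq pw (z.1 - z.2) ∂γ)

/-- The weighted Wasserstein-2 distance `d_{W2,p}`. -/
def W2 (pw : Fin m → ℝ) (μ ν : Measure (PiLp 2 E)) : ℝ :=
  sInf {r | ∃ γ, IsCoupling γ μ ν ∧ r = couplingCost pw γ}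

/-- `γ` is an optimal coupling of `(μ, ν)` w.r.t. `d_{W2,p}`. -/
def IsOptimalCoupling (pw : Fin m → ℝ) (γ : Measure (PiLp 2 E × PiLp 2 E))
    (μ ν : Measure (PiLp 2 E)) : Prop :=
  IsCoupling γ μ ν ∧ couplingCost pw γ = W2 pw μ ν

/-- The Markov operator `μ ↦ μ𝒫 = ∑ᵢ ηᵢ (Tᵢ)_* μ`. -/
def markovOp (η : I → ℝ) (T : I → PiLp 2 E → PiLp 2 E)
    (μ : Measure (PiLp 2 E)) : Measure (PiLp 2 E) :=
  ∑ i : I, (ENNReal.ofReal (η i)) • μ.map (T i)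

/-- `μ ∈ 𝒫₂(G)` : Borel probability measure concentrated on `G` with finite second moment. -/
def MemP2 (G : Set (PiLp 2 E)) (μ : Measure (PiLp 2 E)) : Prop :=
  IsProbabilityMeasure μ ∧ μ Gᶜ = 0 ∧ Integrable (fun x => ‖x‖ ^ 2) μ

/-- `d_{W2,p}(μ, inv𝒫)` : distance from `μ` to the invariant measures in `𝒫₂(G)`. -/
def dInv (pw : Fin m → ℝ) (η : I → ℝ) (T : I → PiLp 2 E → PiLp 2 E)
    (G : Set (PiLp 2 E)) (μ : Measure (PiLp 2 E)) : ℝ :=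
  sInf {r | ∃ π, markovOp η T π = π ∧ MemP2 G π ∧ r = W2 pw μ π}

/-- The expected weighted transport discrepancy `∑ᵢ ηᵢ ψ_p(x, y, Tᵢx, Tᵢy)`. -/
def discrep (pw : Fin m → ℝ) (η : I → ℝ) (T : I → PiLp 2 E → PiLp 2 E)
    (z : PiLp 2 E × PiLp 2 E) : ℝ :=
  ∑ i : I, η i * wNormSq pw ((z.1 - T i z.1) - (z.2 - T i z.2))

/-- The invariant Markov transport discrepancy `Ψ`. -/
def Psi (pw : Fin m → ℝ) (η : I → ℝ) (T : I → PiLp 2 E → PiLp 2 E)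
    (G : Set (PiLp 2 E)) (μ : Measure (PiLp 2 E)) : ℝ :=
  sInf {r | ∃ π γ, markovOp η T π = π ∧ MemP2 G π ∧ IsOptimalCoupling pw γ μ π ∧
    r = Real.sqrt (∫ z, discrep pw η T z ∂γ)}


/-! ### Auxiliary lemmas -/

set_option linter.unusedSectionVars false

lemma aux_measurable_toLp :
    Measurable (WithLp.toLp 2 : (∀ j, E j) → PiLp 2 E) :=
  (PiLp.continuous_toLp 2 E).measurable

lemma aux_measurable_coord (j : Fin m) : Measurable fun x : PiLp 2 E => x j :=
  ((continuous_apply j).comp (PiLp.continuous_ofLp 2 E)).measurable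

lemma aux_measurable_app {X : Type*} [MeasurableSpace X] {g : X → PiLp 2 E}
    (hg : Measurable g) (j : Fin m) : Measurable fun x => g x j :=
  (aux_measurable_coord j).comp hg

lemma aux_measurable_blockMap (M : I → Finset (Fin m)) (T' : ∀ j, PiLp 2 E → E j)
    (hmeas : ∀ j, Measurable (T' j)) (i : I) : Measurable (blockMap M T' i) := by
  have key : Measurable fun (x : PiLp 2 E) (j : Fin m) =>
      if j ∈ M i then T' j x else x j :=
    measurable_pi_lambda _ fun j => by
      by_cases hj : j ∈ M i
      · simpa [hj] using hmeas j
      · simpa [hj] using aux_measurable_coord j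
  exact aux_measurable_toLp.comp key

lemma aux_measurable_wNormSq {X : Type*} [MeasurableSpace X] (pw : Fin m → ℝ)
    (g : X → PiLp 2 E) (hg : ∀ j, Measurable fun x => g x j) :
    Measurable fun x => wNormSq pw (g x) := by
  have h : (fun x => wNormSq pw (g x)) = fun x => ∑ j, (pw j)⁻¹ * ‖g x j‖ ^ 2 := rfl
  rw [h]
  exact Finset.measurable_sum _ fun j _ =>
    measurable_const.mul (((hg j).norm).pow_const 2)

lemma aux_normsq_comp_le (w : PiLp 2 E) (j : Fin m) : ‖w j‖ ^ 2 ≤ ‖w‖ ^ 2 := by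
  rw [PiLp.norm_sq_eq_of_L2]
  exact Finset.single_le_sum (f := fun j => ‖w j‖ ^ 2) (fun j _ => sq_nonneg _)
    (Finset.mem_univ j)

lemma aux_wNormSq_nonneg (pw : Fin m → ℝ) (hp : ∀ j, 0 < pw j) (w : PiLp 2 E) :
    0 ≤ wNormSq pw w :=
  Finset.sum_nonneg fun j _ => mul_nonneg (inv_nonneg.2 (hp j).le) (sq_nonneg _)

lemma aux_wNormSq_le (pw : Fin m → ℝ) (hp : ∀ j, 0 < pw j) (w : PiLp 2 E) :
    wNormSq pw w ≤ (∑ j, (pw j)⁻¹) * ‖w‖ ^ 2 := by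
  rw [Finset.sum_mul]
  exact Finset.sum_le_sum fun j _ =>
    mul_le_mul_of_nonneg_left (aux_normsq_comp_le w j) (inv_nonneg.2 (hp j).le)

lemma aux_weight_sum (M : I → Finset (Fin m)) (η : I → ℝ)
    (hηsum : ∑ i : I, η i = 1) (pw : Fin m → ℝ)
    (hpw : ∀ j, pw j = ∑ i : I, if j ∈ M i then η i else 0)
    (j : Fin m) (A B : ℝ) :
    ∑ i : I, η i * (if j ∈ M i then A else B) = pw j * A + (1 - pw j) * B := by
  have h1 : ∀ i : I, η i * (if j ∈ M i then A else B)
      = (if j ∈ M i then η i else 0) * A + (η i - if j ∈ M i then η i else 0) * B := by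
    intro i; split <;> ring
  rw [Finset.sum_congr rfl fun i _ => h1 i, Finset.sum_add_distrib,
    ← Finset.sum_mul, ← Finset.sum_mul, Finset.sum_sub_distrib, hηsum, ← hpw j]

lemma aux_swap (η : I → ℝ) (pw : Fin m → ℝ) (t : I → Fin m → ℝ) :
    ∑ i : I, η i * ∑ j, (pw j)⁻¹ * t i j = ∑ j, (pw j)⁻¹ * ∑ i : I, η i * t i j := by
  simp_rw [Finset.mul_sum]
  rw [Finset.sum_comm]
  exact Finset.sum_congr rfl fun j _ => Finset.sum_congr rfl fun i _ => by ring

lemma aux_sum_wNormSq (M : I → Finset (Fin m)) (T' : ∀ j, PiLp 2 E → E j)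
    (η : I → ℝ) (hηsum : ∑ i : I, η i = 1)
    (pw : Fin m → ℝ) (hpw : ∀ j, pw j = ∑ i : I, if j ∈ M i then η i else 0)
    (hp : ∀ j, 0 < pw j) (x y : PiLp 2 E) :
    ∑ i : I, η i * wNormSq pw (blockMap M T' i x - blockMap M T' i y)
      = (∑ j, ‖T' j x - T' j y‖ ^ 2) + wNormSq pw (x - y) - ∑ j, ‖x j - y j‖ ^ 2 := by
  have hcomp : ∀ i, wNormSq pw (blockMap M T' i x - blockMap M T' i y)
      = ∑ j, (pw j)⁻¹ * (if j ∈ M i then ‖T' j x - T' j y‖ ^ 2 else ‖x j - y j‖ ^ 2) := by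
    intro i
    refine Finset.sum_congr rfl fun j _ => ?_
    have h : (blockMap M T' i x - blockMap M T' i y) j
        = if j ∈ M i then T' j x - T' j y else x j - y j := by
      by_cases hj : j ∈ M i <;> simp [blockMap, hj, PiLp.sub_apply]
    rw [h]
    by_cases hj : j ∈ M i <;> simp [hj]
  calc ∑ i : I, η i * wNormSq pw (blockMap M T' i x - blockMap M T' i y)
      = ∑ j, (pw j)⁻¹ * ∑ i : I, η i *
          (if j ∈ M i then ‖T' j x - T' j y‖ ^ 2 else ‖x j - y j‖ ^ 2) := by
        rw [Finset.sum_congr rfl fun i _ => by rw [hcomp i]]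
        exact aux_swap η pw _
    _ = ∑ j, ((‖T' j x - T' j y‖ ^ 2) + ((pw j)⁻¹ * ‖x j - y j‖ ^ 2 - ‖x j - y j‖ ^ 2)) := by
        refine Finset.sum_congr rfl fun j _ => ?_
        rw [aux_weight_sum M η hηsum pw hpw]
        have hpj : pw j ≠ 0 := (hp j).ne'
        field_simp
    _ = _ := by
        rw [Finset.sum_add_distrib, Finset.sum_sub_distrib]
        have h : wNormSq pw (x - y) = ∑ j, (pw j)⁻¹ * ‖x j - y j‖ ^ 2 := rfl
        rw [h]
        ring

lemma aux_discrep_eq (M : I → Finset (Fin m)) (T' : ∀ j, PiLp 2 E → E j)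
    (η : I → ℝ) (hηsum : ∑ i : I, η i = 1)
    (pw : Fin m → ℝ) (hpw : ∀ j, pw j = ∑ i : I, if j ∈ M i then η i else 0)
    (hp : ∀ j, 0 < pw j) (i₁ : I) (hi₁ : M i₁ = Finset.univ) (x y : PiLp 2 E) :
    discrep pw η (blockMap M T') (x, y)
      = ‖(x - blockMap M T' i₁ x) - (y - blockMap M T' i₁ y)‖ ^ 2 := by
  have hcomp : ∀ (i : I) (j : Fin m),
      ((x - blockMap M T' i x) - (y - blockMap M T' i y)) j
        = if j ∈ M i then (x j - T' j x) - (y j - T' j y) else 0 := by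
    intro i j
    by_cases hj : j ∈ M i <;> simp [blockMap, hj, PiLp.sub_apply]
  have hcomp2 : ∀ i : I, wNormSq pw ((x - blockMap M T' i x) - (y - blockMap M T' i y))
      = ∑ j, (pw j)⁻¹ *
          (if j ∈ M i then ‖(x j - T' j x) - (y j - T' j y)‖ ^ 2 else 0) := by
    intro i
    refine Finset.sum_congr rfl fun j _ => ?_
    rw [hcomp i j]
    by_cases hj : j ∈ M i <;> simp [hj]
  calc discrep pw η (blockMap M T') (x, y)
      = ∑ i : I, η i * wNormSq pw
          ((x - blockMap M T' i x) - (y - blockMap M T' i y)) := rfl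
    _ = ∑ j, (pw j)⁻¹ * ∑ i : I, η i *
          (if j ∈ M i then ‖(x j - T' j x) - (y j - T' j y)‖ ^ 2 else 0) := by
        rw [Finset.sum_congr rfl fun i _ => by rw [hcomp2 i]]
        exact aux_swap η pw _
    _ = ∑ j, ‖(x j - T' j x) - (y j - T' j y)‖ ^ 2 := by
        refine Finset.sum_congr rfl fun j _ => ?_
        rw [aux_weight_sum M η hηsum pw hpw]
        have hpj : pw j ≠ 0 := (hp j).ne'
        field_simp
        ring
    _ = _ := by
        rw [PiLp.norm_sq_eq_of_L2]
        refine Finset.sum_congr rfl fun j _ => ?_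
        have hj : j ∈ M i₁ := by rw [hi₁]; exact Finset.mem_univ j
        simp [blockMap, hj, PiLp.sub_apply]

lemma aux_sum_T1 (M : I → Finset (Fin m)) (T' : ∀ j, PiLp 2 E → E j)
    (i₁ : I) (hi₁ : M i₁ = Finset.univ) (x y : PiLp 2 E) :
    (∑ j, ‖T' j x - T' j y‖ ^ 2) = ‖blockMap M T' i₁ x - blockMap M T' i₁ y‖ ^ 2 := by
  rw [PiLp.norm_sq_eq_of_L2]
  refine Finset.sum_congr rfl fun j _ => ?_
  have hj : j ∈ M i₁ := by rw [hi₁]; exact Finset.mem_univ j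
  simp [blockMap, hj, PiLp.sub_apply]

lemma aux_norm_sq_sum (x y : PiLp 2 E) : ‖x - y‖ ^ 2 = ∑ j, ‖x j - y j‖ ^ 2 := by
  rw [PiLp.norm_sq_eq_of_L2]
  exact Finset.sum_congr rfl fun j _ => by rw [PiLp.sub_apply]

lemma aux_pointwise (M : I → Finset (Fin m)) (i₁ : I) (hi₁ : M i₁ = Finset.univ)
    (η : I → ℝ) (hηsum : ∑ i : I, η i = 1)
    (pw : Fin m → ℝ) (hpw : ∀ j, pw j = ∑ i : I, if j ∈ M i then η i else 0)
    (hp : ∀ j, 0 < pw j) (pbar : ℝ) (hpbar : IsGreatest (Set.range pw) pbar)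
    (T' : ∀ j, PiLp 2 E → E j) (G : Set (PiLp 2 E))
    (α ε : ℝ) (hε0 : 0 ≤ ε)
    (hT1 : ∀ x ∈ G, ∀ y ∈ G,
      ‖blockMap M T' i₁ x - blockMap M T' i₁ y‖ ^ 2
        ≤ (1 + ε) * ‖x - y‖ ^ 2
          - ((1 - α) / α) * ‖(x - blockMap M T' i₁ x) - (y - blockMap M T' i₁ y)‖ ^ 2)
    (x : PiLp 2 E) (hx : x ∈ G) (y : PiLp 2 E) (hy : y ∈ G) :
    ∑ i : I, η i * wNormSq pw (blockMap M T' i x - blockMap M T' i y)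
      ≤ (1 + pbar * ε) * wNormSq pw (x - y)
        - ((1 - α) / α) * discrep pw η (blockMap M T') (x, y) := by
  have e1 := aux_sum_wNormSq M T' η hηsum pw hpw hp x y
  have e2 := aux_discrep_eq M T' η hηsum pw hpw hp i₁ hi₁ x y
  have e3 := aux_sum_T1 M T' i₁ hi₁ x y
  have e5 := aux_norm_sq_sum x y
  have e6 : ‖x - y‖ ^ 2 ≤ pbar * wNormSq pw (x - y) := by
    rw [aux_norm_sq_sum x y]
    have h : pbar * wNormSq pw (x - y)
        = ∑ j, pbar * ((pw j)⁻¹ * ‖x j - y j‖ ^ 2) := by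
      have h0 : wNormSq pw (x - y) = ∑ j, (pw j)⁻¹ * ‖x j - y j‖ ^ 2 := rfl
      rw [h0, Finset.mul_sum]
    rw [h]
    refine Finset.sum_le_sum fun j _ => ?_
    have h1 : (1:ℝ) ≤ pbar * (pw j)⁻¹ := by
      rw [← div_eq_mul_inv, le_div_iff₀ (hp j), one_mul]
      exact hpbar.2 ⟨j, rfl⟩
    calc ‖x j - y j‖ ^ 2 = 1 * ‖x j - y j‖ ^ 2 := (one_mul _).symm
      _ ≤ (pbar * (pw j)⁻¹) * ‖x j - y j‖ ^ 2 :=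
          mul_le_mul_of_nonneg_right h1 (sq_nonneg _)
      _ = pbar * ((pw j)⁻¹ * ‖x j - y j‖ ^ 2) := by ring
  have hT := hT1 x hx y hy
  have hmul : ε * ‖x - y‖ ^ 2 ≤ ε * (pbar * wNormSq pw (x - y)) :=
    mul_le_mul_of_nonneg_left e6 hε0
  rw [e1, e2]
  linarith [hT, e3, e5, hmul]

lemma aux_blockMap_bound (M : I → Finset (Fin m)) (i₁ : I) (hi₁ : M i₁ = Finset.univ)
    (pw : Fin m → ℝ) (hp : ∀ j, 0 < pw j) (T' : ∀ j, PiLp 2 E → E j)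
    (G : Set (PiLp 2 E)) (α ε : ℝ) (hc : 0 ≤ (1 - α) / α) (hε0 : 0 ≤ ε)
    (hT1 : ∀ x ∈ G, ∀ y ∈ G,
      ‖blockMap M T' i₁ x - blockMap M T' i₁ y‖ ^ 2
        ≤ (1 + ε) * ‖x - y‖ ^ 2
          - ((1 - α) / α) * ‖(x - blockMap M T' i₁ x) - (y - blockMap M T' i₁ y)‖ ^ 2)
    (i : I) (x : PiLp 2 E) (hx : x ∈ G) (y : PiLp 2 E) (hy : y ∈ G) :
    wNormSq pw (blockMap M T' i x - blockMap M T' i y)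
      ≤ ((∑ j, (pw j)⁻¹) * (1 + ε)) * ‖x - y‖ ^ 2 := by
  have hT := hT1 x hx y hy
  have h1 : ‖blockMap M T' i₁ x - blockMap M T' i₁ y‖ ^ 2 ≤ (1 + ε) * ‖x - y‖ ^ 2 := by
    have hnn := mul_nonneg hc
      (sq_nonneg ‖(x - blockMap M T' i₁ x) - (y - blockMap M T' i₁ y)‖)
    linarith
  have hcomp : ∀ j, ‖(blockMap M T' i x - blockMap M T' i y) j‖ ^ 2
      ≤ (1 + ε) * ‖x - y‖ ^ 2 := by
    intro j
    by_cases hj : j ∈ M i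
    · have e : (blockMap M T' i x - blockMap M T' i y) j = T' j x - T' j y := by
        simp [blockMap, hj, PiLp.sub_apply]
      rw [e]
      have hj1 : j ∈ M i₁ := by rw [hi₁]; exact Finset.mem_univ j
      have e2 : (blockMap M T' i₁ x - blockMap M T' i₁ y) j = T' j x - T' j y := by
        simp [blockMap, hj1, PiLp.sub_apply]
      calc ‖T' j x - T' j y‖ ^ 2
          = ‖(blockMap M T' i₁ x - blockMap M T' i₁ y) j‖ ^ 2 := by rw [e2]
        _ ≤ ‖blockMap M T' i₁ x - blockMap M T' i₁ y‖ ^ 2 := aux_normsq_comp_le _ j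
        _ ≤ (1 + ε) * ‖x - y‖ ^ 2 := h1
    · have e : (blockMap M T' i x - blockMap M T' i y) j = x j - y j := by
        simp [blockMap, hj, PiLp.sub_apply]
      rw [e]
      have h2 : ‖x j - y j‖ ^ 2 ≤ ‖x - y‖ ^ 2 := by
        have := aux_normsq_comp_le (x - y) j
        rwa [PiLp.sub_apply] at this
      nlinarith [sq_nonneg ‖x - y‖]
  calc wNormSq pw (blockMap M T' i x - blockMap M T' i y)
      = ∑ j, (pw j)⁻¹ * ‖(blockMap M T' i x - blockMap M T' i y) j‖ ^ 2 := rfl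
    _ ≤ ∑ j, (pw j)⁻¹ * ((1 + ε) * ‖x - y‖ ^ 2) :=
        Finset.sum_le_sum fun j _ =>
          mul_le_mul_of_nonneg_left (hcomp j) (inv_nonneg.2 (hp j).le)
    _ = ((∑ j, (pw j)⁻¹) * (1 + ε)) * ‖x - y‖ ^ 2 := by
        rw [← Finset.sum_mul]
        ring

lemma aux_discrep_bound (M : I → Finset (Fin m)) (i₁ : I) (hi₁ : M i₁ = Finset.univ)
    (η : I → ℝ) (hηsum : ∑ i : I, η i = 1)
    (pw : Fin m → ℝ) (hpw : ∀ j, pw j = ∑ i : I, if j ∈ M i then η i else 0)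
    (hp : ∀ j, 0 < pw j) (T' : ∀ j, PiLp 2 E → E j)
    (G : Set (PiLp 2 E)) (α ε : ℝ) (hα : α ∈ Set.Ioo (0:ℝ) 1) (hε0 : 0 ≤ ε)
    (hT1 : ∀ x ∈ G, ∀ y ∈ G,
      ‖blockMap M T' i₁ x - blockMap M T' i₁ y‖ ^ 2
        ≤ (1 + ε) * ‖x - y‖ ^ 2
          - ((1 - α) / α) * ‖(x - blockMap M T' i₁ x) - (y - blockMap M T' i₁ y)‖ ^ 2)
    (x : PiLp 2 E) (hx : x ∈ G) (y : PiLp 2 E) (hy : y ∈ G) :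
    discrep pw η (blockMap M T') (x, y)
      ≤ ((α / (1 - α)) * (1 + ε)) * ‖x - y‖ ^ 2 := by
  obtain ⟨hα0, hα1⟩ := hα
  rw [aux_discrep_eq M T' η hηsum pw hpw hp i₁ hi₁ x y]
  have hT := hT1 x hx y hy
  have hsq := sq_nonneg ‖blockMap M T' i₁ x - blockMap M T' i₁ y‖
  have key : ((1 - α) / α) * ‖(x - blockMap M T' i₁ x) - (y - blockMap M T' i₁ y)‖ ^ 2
      ≤ (1 + ε) * ‖x - y‖ ^ 2 := by linarith
  have hca : (0:ℝ) < (1 - α) / α := div_pos (by linarith) hα0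
  have hone : (α / (1 - α)) * ((1 - α) / α) = 1 := by
    field_simp
  calc ‖(x - blockMap M T' i₁ x) - (y - blockMap M T' i₁ y)‖ ^ 2
      = (α / (1 - α)) * (((1 - α) / α)
          * ‖(x - blockMap M T' i₁ x) - (y - blockMap M T' i₁ y)‖ ^ 2) := by
        rw [← mul_assoc, hone, one_mul]
    _ ≤ (α / (1 - α)) * ((1 + ε) * ‖x - y‖ ^ 2) :=
        mul_le_mul_of_nonneg_left key (div_nonneg hα0.le (by linarith))
    _ = ((α / (1 - α)) * (1 + ε)) * ‖x - y‖ ^ 2 := by ring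

lemma aux_map_finset_sum {X Y : Type*} [MeasurableSpace X] [MeasurableSpace Y]
    (ν : I → Measure X) {f : X → Y} (hf : Measurable f) :
    Measure.map f (∑ i : I, ν i) = ∑ i : I, (ν i).map f := by
  ext s hs
  simp [Measure.map_apply hf hs, Measure.finset_sum_apply]

/-- if each `T_i` is a Borel measurable self-map of the convex set `G` and `T₁` is
aα-fne on `G` with constant `α` and violation at most `ε`, then the Markov operator is aα-fne in
measure with constant `α` and violation at most `p̄ ε`. -/
theorem statement5
    (M : I → Finset (Fin m)) (hM : ∀ i, (M i).Nonempty)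
    (i₁ : I) (hi₁ : M i₁ = Finset.univ)
    (η : I → ℝ) (hη : ∀ i, 0 ≤ η i) (hηsum : ∑ i : I, η i = 1)
    (pw : Fin m → ℝ) (hpw : ∀ j, pw j = ∑ i : I, if j ∈ M i then η i else 0)
    (hp : ∀ j, 0 < pw j)
    (pbar : ℝ) (hpbar : IsGreatest (Set.range pw) pbar)
    (T' : ∀ j, PiLp 2 E → E j) (hmeas : ∀ j, Measurable (T' j))
    (G : Set (PiLp 2 E)) (hG : Convex ℝ G)
    (hself : ∀ i, Set.MapsTo (blockMap M T' i) G G)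
    (α ε : ℝ) (hα : α ∈ Set.Ioo (0 : ℝ) 1) (hε : ε ∈ Set.Ico (0 : ℝ) 1)
    (hT1 : ∀ x ∈ G, ∀ y ∈ G,
      ‖blockMap M T' i₁ x - blockMap M T' i₁ y‖ ^ 2
        ≤ (1 + ε) * ‖x - y‖ ^ 2
          - ((1 - α) / α) * ‖(x - blockMap M T' i₁ x) - (y - blockMap M T' i₁ y)‖ ^ 2) :
    ∀ μ₁ μ₂ : Measure (PiLp 2 E), MemP2 G μ₁ → MemP2 G μ₂ →
      ∀ γ, IsOptimalCoupling pw γ μ₁ μ₂ →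
        (W2 pw (markovOp η (blockMap M T') μ₁) (markovOp η (blockMap M T') μ₂)) ^ 2
          ≤ (1 + pbar * ε) * (W2 pw μ₁ μ₂) ^ 2
            - ((1 - α) / α) * ∫ z, discrep pw η (blockMap M T') z ∂γ := by
  obtain ⟨hα0, hα1⟩ := hα
  obtain ⟨hε0, hε1⟩ := hε
  intro μ₁ μ₂ hμ₁ hμ₂ γ hγopt
  obtain ⟨⟨hγprob, hγ1, hγ2⟩, hγcost⟩ := hγopt
  have hc0 : (0:ℝ) ≤ (1 - α) / α := div_nonneg (by linarith) hα0.le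
  -- measurability facts
  have hT_meas : ∀ i, Measurable (blockMap M T' i) :=
    fun i => aux_measurable_blockMap M T' hmeas i
  have hg_meas : ∀ i, Measurable
      (fun z : PiLp 2 E × PiLp 2 E => (blockMap M T' i z.1, blockMap M T' i z.2)) :=
    fun i => ((hT_meas i).comp measurable_fst).prodMk ((hT_meas i).comp measurable_snd)
  have hf_meas : Measurable (fun z : PiLp 2 E × PiLp 2 E => wNormSq pw (z.1 - z.2)) :=
    aux_measurable_wNormSq pw _ fun j =>
      (aux_measurable_app measurable_fst j).sub (aux_measurable_app measurable_snd j)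
  have hfg_meas : ∀ i, Measurable
      (fun z : PiLp 2 E × PiLp 2 E =>
        wNormSq pw (blockMap M T' i z.1 - blockMap M T' i z.2)) :=
    fun i => aux_measurable_wNormSq pw _ fun j =>
      (aux_measurable_app ((hT_meas i).comp measurable_fst) j).sub
        (aux_measurable_app ((hT_meas i).comp measurable_snd) j)
  have hψ_meas : ∀ i, Measurable (fun z : PiLp 2 E × PiLp 2 E =>
      wNormSq pw ((z.1 - blockMap M T' i z.1) - (z.2 - blockMap M T' i z.2))) :=
    fun i => aux_measurable_wNormSq pw _ fun j =>
      ((aux_measurable_app measurable_fst j).sub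
        (aux_measurable_app ((hT_meas i).comp measurable_fst) j)).sub
      ((aux_measurable_app measurable_snd j).sub
        (aux_measurable_app ((hT_meas i).comp measurable_snd) j))
  have hdisc_meas : Measurable (fun z => discrep pw η (blockMap M T') z) := by
    have h : (fun z => discrep pw η (blockMap M T') z)
        = fun z : PiLp 2 E × PiLp 2 E => ∑ i : I, η i *
            wNormSq pw ((z.1 - blockMap M T' i z.1) - (z.2 - blockMap M T' i z.2)) := rfl
    rw [h]
    exact Finset.measurable_sum _ fun i _ => measurable_const.mul (hψ_meas i)
  -- γ is concentrated on G × G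
  have hG1 : γ (Prod.fst ⁻¹' Gᶜ) = 0 := by
    have h := Measure.le_map_apply (measurable_fst.aemeasurable (μ := γ)) Gᶜ
    rw [hγ1, hμ₁.2.1] at h
    exact le_antisymm h zero_le
  have hG2 : γ (Prod.snd ⁻¹' Gᶜ) = 0 := by
    have h := Measure.le_map_apply (measurable_snd.aemeasurable (μ := γ)) Gᶜ
    rw [hγ2, hμ₂.2.1] at h
    exact le_antisymm h zero_le
  have hae : ∀ᵐ z ∂γ, z.1 ∈ G ∧ z.2 ∈ G := by
    have h1 : ∀ᵐ z ∂γ, z.1 ∈ G := by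
      rw [MeasureTheory.ae_iff]
      exact measure_mono_null (fun z hz => hz) hG1
    have h2 : ∀ᵐ z ∂γ, z.2 ∈ G := by
      rw [MeasureTheory.ae_iff]
      exact measure_mono_null (fun z hz => hz) hG2
    exact h1.and h2
  -- integrability facts
  have hnorm1 : Integrable (fun z : PiLp 2 E × PiLp 2 E => ‖z.1‖ ^ 2) γ := by
    have h := hμ₁.2.2
    rw [← hγ1] at h
    exact (integrable_map_measure
      ((continuous_norm.pow 2).aestronglyMeasurable)
      measurable_fst.aemeasurable).mp h
  have hnorm2 : Integrable (fun z : PiLp 2 E × PiLp 2 E => ‖z.2‖ ^ 2) γ := by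
    have h := hμ₂.2.2
    rw [← hγ2] at h
    exact (integrable_map_measure
      ((continuous_norm.pow 2).aestronglyMeasurable)
      measurable_snd.aemeasurable).mp h
  have hnormsub : Integrable (fun z : PiLp 2 E × PiLp 2 E => ‖z.1 - z.2‖ ^ 2) γ := by
    refine Integrable.mono' ((hnorm1.const_mul 2).add (hnorm2.const_mul 2))
      (((continuous_fst.sub continuous_snd).norm.pow 2).aestronglyMeasurable)
      (Filter.Eventually.of_forall fun z => ?_)
    simp only [Pi.add_apply]
    rw [Real.norm_eq_abs, abs_of_nonneg (sq_nonneg _)]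
    nlinarith [norm_sub_le z.1 z.2, norm_nonneg (z.1 - z.2), norm_nonneg z.1,
      norm_nonneg z.2, sq_nonneg (‖z.1‖ - ‖z.2‖)]
  have hf_int : Integrable (fun z : PiLp 2 E × PiLp 2 E => wNormSq pw (z.1 - z.2)) γ := by
    refine Integrable.mono' (hnormsub.const_mul (∑ j, (pw j)⁻¹))
      hf_meas.aestronglyMeasurable (Filter.Eventually.of_forall fun z => ?_)
    rw [Real.norm_eq_abs, abs_of_nonneg (aux_wNormSq_nonneg pw hp _)]
    exact aux_wNormSq_le pw hp _
  have hfg_int : ∀ i, Integrable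
      (fun z : PiLp 2 E × PiLp 2 E =>
        wNormSq pw (blockMap M T' i z.1 - blockMap M T' i z.2)) γ := by
    intro i
    refine Integrable.mono' (hnormsub.const_mul ((∑ j, (pw j)⁻¹) * (1 + ε)))
      ((hfg_meas i).aestronglyMeasurable) ?_
    filter_upwards [hae] with z hz
    rw [Real.norm_eq_abs, abs_of_nonneg (aux_wNormSq_nonneg pw hp _)]
    exact aux_blockMap_bound M i₁ hi₁ pw hp T' G α ε hc0 hε0 hT1 i z.1 hz.1 z.2 hz.2
  have hdisc_int : Integrable (fun z => discrep pw η (blockMap M T') z) γ := by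
    refine Integrable.mono' (hnormsub.const_mul ((α / (1 - α)) * (1 + ε)))
      hdisc_meas.aestronglyMeasurable ?_
    filter_upwards [hae] with z hz
    have hnn : 0 ≤ discrep pw η (blockMap M T') z :=
      Finset.sum_nonneg fun i _ => mul_nonneg (hη i) (aux_wNormSq_nonneg pw hp _)
    rw [Real.norm_eq_abs, abs_of_nonneg hnn]
    exact aux_discrep_bound M i₁ hi₁ η hηsum pw hpw hp T' G α ε ⟨hα0, hα1⟩ hε0 hT1
      z.1 hz.1 z.2 hz.2
  -- the transported coupling
  set γ' : Measure (PiLp 2 E × PiLp 2 E) :=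
    ∑ i : I, (ENNReal.ofReal (η i)) • γ.map
      (fun z : PiLp 2 E × PiLp 2 E => (blockMap M T' i z.1, blockMap M T' i z.2))
    with hγ'def
  have hγ'prob : IsProbabilityMeasure γ' := by
    constructor
    have h1 : ∀ i : I, ((ENNReal.ofReal (η i)) • γ.map
        (fun z : PiLp 2 E × PiLp 2 E => (blockMap M T' i z.1, blockMap M T' i z.2)))
          Set.univ = ENNReal.ofReal (η i) := by
      intro i
      haveI := Measure.isProbabilityMeasure_map (μ := γ) (hg_meas i).aemeasurable
      simp
    rw [hγ'def, Measure.finset_sum_apply, Finset.sum_congr rfl fun i _ => h1 i,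
      ← ENNReal.ofReal_sum_of_nonneg fun i _ => hη i, hηsum, ENNReal.ofReal_one]
  have hγ'1 : γ'.map Prod.fst = markovOp η (blockMap M T') μ₁ := by
    rw [hγ'def, aux_map_finset_sum _ measurable_fst]
    unfold markovOp
    refine Finset.sum_congr rfl fun i _ => ?_
    rw [Measure.map_smul]
    congr 1
    rw [Measure.map_map measurable_fst (hg_meas i)]
    have h : (Prod.fst ∘ fun z : PiLp 2 E × PiLp 2 E =>
        (blockMap M T' i z.1, blockMap M T' i z.2)) = blockMap M T' i ∘ Prod.fst := rfl
    rw [h, ← Measure.map_map (hT_meas i) measurable_fst, hγ1]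
  have hγ'2 : γ'.map Prod.snd = markovOp η (blockMap M T') μ₂ := by
    rw [hγ'def, aux_map_finset_sum _ measurable_snd]
    unfold markovOp
    refine Finset.sum_congr rfl fun i _ => ?_
    rw [Measure.map_smul]
    congr 1
    rw [Measure.map_map measurable_snd (hg_meas i)]
    have h : (Prod.snd ∘ fun z : PiLp 2 E × PiLp 2 E =>
        (blockMap M T' i z.1, blockMap M T' i z.2)) = blockMap M T' i ∘ Prod.snd := rfl
    rw [h, ← Measure.map_map (hT_meas i) measurable_snd, hγ2]
  -- cost of the transported coupling
  have hint_map : ∀ i, Integrable (fun z : PiLp 2 E × PiLp 2 E => wNormSq pw (z.1 - z.2))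
      (γ.map (fun z : PiLp 2 E × PiLp 2 E =>
        (blockMap M T' i z.1, blockMap M T' i z.2))) := by
    intro i
    rw [integrable_map_measure hf_meas.aestronglyMeasurable (hg_meas i).aemeasurable]
    exact hfg_int i
  have hγ'int : ∫ z, wNormSq pw (z.1 - z.2) ∂γ'
      = ∑ i : I, η i * ∫ z, wNormSq pw (blockMap M T' i z.1 - blockMap M T' i z.2) ∂γ := by
    rw [hγ'def, integral_finset_sum_measure
      (fun i _ => (hint_map i).smul_measure ENNReal.ofReal_ne_top)]
    refine Finset.sum_congr rfl fun i _ => ?_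
    rw [integral_smul_measure, ENNReal.toReal_ofReal (hη i), smul_eq_mul,
      integral_map (hg_meas i).aemeasurable hf_meas.aestronglyMeasurable]
  have hsum_int : (∑ i : I, η i *
        ∫ z, wNormSq pw (blockMap M T' i z.1 - blockMap M T' i z.2) ∂γ)
      = ∫ z, ∑ i : I, η i *
          wNormSq pw (blockMap M T' i z.1 - blockMap M T' i z.2) ∂γ := by
    rw [integral_finset_sum Finset.univ fun i _ => (hfg_int i).const_mul (η i)]
    exact Finset.sum_congr rfl fun i _ => (integral_const_mul _ _).symm
  have hmono : (∫ z, ∑ i : I, η i *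
        wNormSq pw (blockMap M T' i z.1 - blockMap M T' i z.2) ∂γ)
      ≤ (1 + pbar * ε) * (∫ z, wNormSq pw (z.1 - z.2) ∂γ)
        - ((1 - α) / α) * ∫ z, discrep pw η (blockMap M T') z ∂γ := by
    rw [← integral_const_mul, ← integral_const_mul,
      ← integral_sub (hf_int.const_mul _) (hdisc_int.const_mul _)]
    refine integral_mono_ae
      (integrable_finset_sum _ fun i _ => (hfg_int i).const_mul (η i))
      ((hf_int.const_mul _).sub (hdisc_int.const_mul _)) ?_
    filter_upwards [hae] with z hz
    exact aux_pointwise M i₁ hi₁ η hηsum pw hpw hp pbar hpbar T' G α ε hε0 hT1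
      z.1 hz.1 z.2 hz.2
  -- Wasserstein estimates
  have hW2le : W2 pw (markovOp η (blockMap M T') μ₁) (markovOp η (blockMap M T') μ₂)
      ≤ couplingCost pw γ' := by
    apply csInf_le
    · exact ⟨0, fun r hr => by obtain ⟨γ'', _, rfl⟩ := hr; exact Real.sqrt_nonneg _⟩
    · exact ⟨γ', ⟨hγ'prob, hγ'1, hγ'2⟩, rfl⟩
  have hW2nonneg : 0 ≤ W2 pw (markovOp η (blockMap M T') μ₁)
      (markovOp η (blockMap M T') μ₂) :=
    Real.sInf_nonneg fun r hr => by obtain ⟨γ'', _, rfl⟩ := hr; exact Real.sqrt_nonneg _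
  have hA_nonneg : 0 ≤ ∫ z, wNormSq pw (z.1 - z.2) ∂γ' :=
    integral_nonneg fun z => aux_wNormSq_nonneg pw hp _
  have hsq : (W2 pw (markovOp η (blockMap M T') μ₁) (markovOp η (blockMap M T') μ₂)) ^ 2
      ≤ ∫ z, wNormSq pw (z.1 - z.2) ∂γ' := by
    calc (W2 pw (markovOp η (blockMap M T') μ₁) (markovOp η (blockMap M T') μ₂)) ^ 2
        ≤ (couplingCost pw γ') ^ 2 := pow_le_pow_left₀ hW2nonneg hW2le 2
      _ = ∫ z, wNormSq pw (z.1 - z.2) ∂γ' := Real.sq_sqrt hA_nonneg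
  have hB : (W2 pw μ₁ μ₂) ^ 2 = ∫ z, wNormSq pw (z.1 - z.2) ∂γ := by
    rw [← hγcost]
    exact Real.sq_sqrt (integral_nonneg fun z => aux_wNormSq_nonneg pw hp _)
  calc (W2 pw (markovOp η (blockMap M T') μ₁) (markovOp η (blockMap M T') μ₂)) ^ 2
      ≤ ∫ z, wNormSq pw (z.1 - z.2) ∂γ' := hsq
    _ = ∑ i : I, η i *
          ∫ z, wNormSq pw (blockMap M T' i z.1 - blockMap M T' i z.2) ∂γ := hγ'int
    _ = ∫ z, ∑ i : I, η i *
          wNormSq pw (blockMap M T' i z.1 - blockMap M T' i z.2) ∂γ := hsum_int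
    _ ≤ (1 + pbar * ε) * (∫ z, wNormSq pw (z.1 - z.2) ∂γ)
        - ((1 - α) / α) * ∫ z, discrep pw η (blockMap M T') z ∂γ := hmono
    _ = (1 + pbar * ε) * (W2 pw μ₁ μ₂) ^ 2
        - ((1 - α) / α) * ∫ z, discrep pw η (blockMap M T') z ∂γ := by rw [hB]
end
end

section
/- Let G ⊆ E be compact, let each T'_j be continuous with each T_i a self-map of G, let C := {x ∈ G : T_i x = x for every i with η_i > 0} be nonempty, and suppose the paracontraction-in-expectation property holds: Σ_{i∈𝕀} η_i ‖T_i x − y‖_p < ‖x − y‖_p for every y ∈ C and every x ∈ G \ C. Then a Borel probability measure π on G is invariant for the Markov operator 𝒫 (i.e., π𝒫 = π) if and only if the support of π is contained in C. -/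
open Finset MeasureTheory Filter
open scoped RealInnerProductSpace

noncomputable section

variable {m : ℕ} {I : Type*} [Fintype I]
variable {E : Fin m → Type*} [∀ j, NormedAddCommGroup (E j)]
  [∀ j, InnerProductSpace ℝ (E j)] [∀ j, FiniteDimensional ℝ (E j)]
variable [∀ j, MeasurableSpace (E j)] [∀ j, BorelSpace (E j)]
variable [MeasurableSpace (PiLp 2 E)] [BorelSpace (PiLp 2 E)]

/-- on a compact set `G`, under the paracontraction-in-expectation property w.r.t.
the common fixed point set `C`, a Borel probability measure on `G` is invariant for the Markov
operator iff its support is contained in `C`. -/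
theorem statement7
    (M : I → Finset (Fin m)) (hM : ∀ i, (M i).Nonempty)
    (i₁ : I) (hi₁ : M i₁ = Finset.univ)
    (η : I → ℝ) (hη : ∀ i, 0 ≤ η i) (hηsum : ∑ i : I, η i = 1)
    (pw : Fin m → ℝ) (hpw : ∀ j, pw j = ∑ i : I, if j ∈ M i then η i else 0)
    (hp : ∀ j, 0 < pw j)
    (T' : ∀ j, PiLp 2 E → E j) (hcont : ∀ j, Continuous (T' j))
    (G : Set (PiLp 2 E)) (hG : IsCompact G)
    (hself : ∀ i, Set.MapsTo (blockMap M T' i) G G)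
    (C : Set (PiLp 2 E))
    (hC : C = {x ∈ G | ∀ i, 0 < η i → blockMap M T' i x = x})
    (hCne : C.Nonempty)
    (hpara : ∀ y ∈ C, ∀ x ∈ G \ C,
      ∑ i : I, η i * wNorm pw (blockMap M T' i x - y) < wNorm pw (x - y)) :
    ∀ π : Measure (PiLp 2 E), IsProbabilityMeasure π → π Gᶜ = 0 →
      (markovOp η (blockMap M T') π = π ↔ π Cᶜ = 0) := by
  intro π hπprob hπG
  set T : I → PiLp 2 E → PiLp 2 E := blockMap M T' with hT
  -- continuity of each T i
  have hTcont : ∀ i, Continuous (T i) := by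
    intro i
    have : Continuous fun x : PiLp 2 E => (fun j => if j ∈ M i then T' j x else x j : ∀ j, E j) := by
      apply continuous_pi
      intro j
      by_cases hj : j ∈ M i
      · simpa [hj] using hcont j
      · simpa [hj] using
          (show Continuous fun a : PiLp 2 E => a.ofLp j from
            (continuous_apply j).comp (PiLp.continuous_ofLp 2 E))
    exact (PiLp.continuous_toLp 2 E).comp this
  have hTmeas : ∀ i, Measurable (T i) := fun i => (hTcont i).measurable
  obtain ⟨y, hy⟩ := hCne
  -- the function f x = ‖x - y‖_p
  set f : PiLp 2 E → ℝ := fun x => wNorm pw (x - y) with hf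
  have hfcont : Continuous f := by
    apply Real.continuous_sqrt.comp
    unfold wNormSq
    apply continuous_finset_sum
    intro j _
    exact continuous_const.mul
      ((((continuous_apply j).comp (PiLp.continuous_ofLp 2 E)).comp
        (continuous_id.sub continuous_const)).norm.pow 2)
  have hGae : ∀ᵐ x ∂π, x ∈ G := by
    rw [MeasureTheory.ae_iff]
    exact hπG
  -- integrability of continuous functions on G
  have hintegrable : ∀ u : PiLp 2 E → ℝ, Continuous u → Integrable u π := by
    intro u hu
    obtain ⟨B, hB⟩ := hG.exists_bound_of_continuousOn hu.continuousOn
    refine Integrable.mono' (integrable_const B) hu.aestronglyMeasurable ?_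
    filter_upwards [hGae] with x hx using hB x hx
  -- equality on C
  have hCeq : ∀ x ∈ C, (∑ i : I, η i * f (T i x)) = f x := by
    intro x hx
    have h1 : (∑ i : I, η i * f (T i x)) = ∑ i : I, η i * f x := by
      apply Finset.sum_congr rfl
      intro i _
      rcases lt_or_eq_of_le (hη i) with hpos | hzero
      · rw [hC] at hx
        rw [hx.2 i hpos]
      · rw [← hzero]; ring
    rw [h1, ← Finset.sum_mul, hηsum, one_mul]
  constructor
  · -- invariance implies support in C
    intro hinv
    have hint : ∀ i : I, Integrable (fun x => f (T i x)) π :=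
      fun i => hintegrable _ (hfcont.comp (hTcont i))
    set g : PiLp 2 E → ℝ := fun x => ∑ i : I, η i * f (T i x) with hg
    have hgint : Integrable g π := by
      apply integrable_finset_sum
      intro i _
      exact (hint i).const_mul _
    have hfint : Integrable f π := hintegrable _ hfcont
    -- ∫ f dπ = ∫ g dπ
    have hkey : ∫ x, f x ∂π = ∫ x, g x ∂π := by
      conv_lhs => rw [← hinv]
      unfold markovOp
      rw [MeasureTheory.integral_finset_sum_measure]
      · have : ∀ i : I, ∫ x, f x ∂((ENNReal.ofReal (η i)) • π.map (T i))
            = η i * ∫ x, f (T i x) ∂π := by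
          intro i
          rw [MeasureTheory.integral_smul_measure, ENNReal.toReal_ofReal (hη i),
            MeasureTheory.integral_map (hTmeas i).aemeasurable hfcont.aestronglyMeasurable]
          simp [smul_eq_mul]
        rw [Finset.sum_congr rfl fun i _ => this i]
        rw [hg]
        rw [MeasureTheory.integral_finset_sum]
        · apply Finset.sum_congr rfl
          intro i _
          rw [MeasureTheory.integral_const_mul]
        · intro i _
          exact (hint i).const_mul _
      · intro i _
        refine Integrable.smul_measure ?_ ENNReal.ofReal_ne_top
        rw [integrable_map_measure hfcont.aestronglyMeasurable (hTmeas i).aemeasurable]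
        exact hint i
    -- g ≤ f a.e. with equality only on C
    have hle : ∀ᵐ x ∂π, 0 ≤ f x - g x := by
      filter_upwards [hGae] with x hxG
      by_cases hxC : x ∈ C
      · rw [sub_nonneg]
        exact le_of_eq (hCeq x hxC)
      · have := hpara y hy x ⟨hxG, hxC⟩
        rw [sub_nonneg, hg]
        exact le_of_lt this
    have hzero : ∫ x, (f x - g x) ∂π = 0 := by
      rw [MeasureTheory.integral_sub hfint hgint, hkey, sub_self]
    have haeeq : (fun x => f x - g x) =ᵐ[π] 0 := by
      rw [← MeasureTheory.integral_eq_zero_iff_of_nonneg_ae hle (hfint.sub hgint)]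
      exact hzero
    have haeC : ∀ᵐ x ∂π, x ∈ C := by
      filter_upwards [hGae, haeeq] with x hxG hxeq
      by_contra hxC
      have hlt := hpara y hy x ⟨hxG, hxC⟩
      have : f x - g x = 0 := hxeq
      rw [sub_eq_zero] at this
      exact absurd this.symm (ne_of_lt hlt)
    rw [MeasureTheory.ae_iff] at haeC
    exact haeC
  · -- support in C implies invariance
    intro hπC
    have haeC : ∀ᵐ x ∂π, x ∈ C := by
      rw [MeasureTheory.ae_iff]
      exact hπC
    have hmap : ∀ i : I, 0 < η i → π.map (T i) = π := by
      intro i hpos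
      have : T i =ᵐ[π] id := by
        filter_upwards [haeC] with x hx
        rw [hC] at hx
        exact hx.2 i hpos
      rw [MeasureTheory.Measure.map_congr this, MeasureTheory.Measure.map_id]
    unfold markovOp
    have hterm : ∀ i : I, (ENNReal.ofReal (η i)) • π.map (T i)
        = (ENNReal.ofReal (η i)) • π := by
      intro i
      rcases lt_or_eq_of_le (hη i) with hpos | hzero
      · rw [hmap i hpos]
      · rw [← hzero]; simp
    rw [Finset.sum_congr rfl fun i _ => hterm i, ← Finset.sum_smul]
    have : (∑ i : I, ENNReal.ofReal (η i)) = 1 := by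
      rw [← ENNReal.ofReal_sum_of_nonneg fun i _ => hη i, hηsum, ENNReal.ofReal_one]
    rw [this, one_smul]
end
end

section
/- Let G ⊆ E be compact, let each T'_j be continuous with each T_i a self-map of G, let C := {x ∈ G : T_i x = x for every i with η_i > 0} be nonempty, and suppose Σ_{i∈𝕀} η_i ‖T_i x − y‖_p² < ‖x − y‖_p² for every y ∈ C and every x ∈ G \ C. Then for every x ∈ G: (a) Ψ(δ_x) = ‖x − T_1 x‖, where δ_x is the Dirac measure at x and T_1 is the blockwise map using all blocks; and (b) (1/√p̄)·inf_{z∈C}‖x − z‖ ≤ inf_{z∈C}‖x − z‖_p = d_{W2,p}(δ_x, inv𝒫), where d_{W2,p}(δ_x, inv𝒫) is the infimum of d_{W2,p}(δ_x, π) over invariant measures π ∈ 𝒫₂(G). -/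
open Finset MeasureTheory Filter
open scoped RealInnerProductSpace

noncomputable section

variable {m : ℕ} {I : Type*} [Fintype I]
variable {E : Fin m → Type*} [∀ j, NormedAddCommGroup (E j)]
  [∀ j, InnerProductSpace ℝ (E j)] [∀ j, FiniteDimensional ℝ (E j)]
variable [∀ j, MeasurableSpace (E j)] [∀ j, BorelSpace (E j)]
variable [MeasurableSpace (PiLp 2 E)] [BorelSpace (PiLp 2 E)]

set_option linter.unusedSectionVars false
set_option maxHeartbeats 1000000

section Aux
variable {m : ℕ} {I : Type*} [Fintype I]
variable {E : Fin m → Type*} [∀ j, NormedAddCommGroup (E j)]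
  [∀ j, InnerProductSpace ℝ (E j)] [∀ j, FiniteDimensional ℝ (E j)]
variable [∀ j, MeasurableSpace (E j)] [∀ j, BorelSpace (E j)]
variable [MeasurableSpace (PiLp 2 E)] [BorelSpace (PiLp 2 E)]

lemma blockMap_continuous (M : I → Finset (Fin m)) (T' : ∀ j, PiLp 2 E → E j)
    (hcont : ∀ j, Continuous (T' j)) (i : I) : Continuous (blockMap M T' i) := by
  unfold blockMap
  apply (PiLp.continuous_toLp 2 E).comp
  apply continuous_pi
  intro j
  by_cases h : j ∈ M i <;> simp only [h, if_true, if_false]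
  · exact hcont j
  · exact (continuous_apply j).comp (PiLp.continuous_ofLp 2 E)

lemma wNormSq_nonneg (pw : Fin m → ℝ) (hp : ∀ j, 0 < pw j) (z : PiLp 2 E) :
    0 ≤ wNormSq pw z :=
  Finset.sum_nonneg fun j _ => mul_nonneg (inv_nonneg.2 (hp j).le) (sq_nonneg _)

lemma wNormSq_continuous (pw : Fin m → ℝ) : Continuous (wNormSq (E := E) pw) := by
  apply continuous_finset_sum
  intro j _
  exact continuous_const.mul (((continuous_apply j).comp (PiLp.continuous_ofLp 2 E)).norm.pow 2)

lemma wNorm_nonneg (pw : Fin m → ℝ) (z : PiLp 2 E) : 0 ≤ wNorm pw z := Real.sqrt_nonneg _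

lemma pbar_pos (pw : Fin m → ℝ) (hp : ∀ j, 0 < pw j)
    {pbar : ℝ} (hpbar : IsGreatest (Set.range pw) pbar) : 0 < pbar := by
  obtain ⟨j, hj⟩ := hpbar.1
  exact hj ▸ hp j

lemma norm_sq_le_pbar_mul (pw : Fin m → ℝ) (hp : ∀ j, 0 < pw j)
    {pbar : ℝ} (hpbar : IsGreatest (Set.range pw) pbar) (z : PiLp 2 E) :
    ‖z‖ ^ 2 ≤ pbar * wNormSq pw z := by
  rw [PiLp.norm_sq_eq_of_L2, wNormSq, Finset.mul_sum]
  refine Finset.sum_le_sum fun j _ => ?_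
  have h1 : pw j ≤ pbar := hpbar.2 ⟨j, rfl⟩
  have h2 : 0 < pw j := hp j
  rw [← mul_assoc]
  refine le_mul_of_one_le_left (sq_nonneg _) ?_
  rw [← div_eq_mul_inv]
  exact (one_le_div h2).2 h1

lemma C_closed (M : I → Finset (Fin m)) (T' : ∀ j, PiLp 2 E → E j) (η : I → ℝ)
    (G : Set (PiLp 2 E)) (C : Set (PiLp 2 E))
    (hcont : ∀ j, Continuous (T' j)) (hG : IsCompact G)
    (hC : C = {x ∈ G | ∀ i, 0 < η i → blockMap M T' i x = x}) : IsClosed C := by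
  have : C = G ∩ ⋂ i, ⋂ (_ : 0 < η i), {x | blockMap M T' i x = x} := by
    rw [hC]; ext x; simp [Set.mem_iInter, Set.mem_setOf_eq]
  rw [this]
  exact hG.isClosed.inter (isClosed_iInter fun i => isClosed_iInter fun _ =>
    isClosed_eq (blockMap_continuous M T' hcont i) continuous_id)

lemma discrep_continuous (pw : Fin m → ℝ) (η : I → ℝ) (M : I → Finset (Fin m))
    (T' : ∀ j, PiLp 2 E → E j) (hcont : ∀ j, Continuous (T' j)) :
    Continuous (discrep pw η (blockMap M T')) := by
  apply continuous_finset_sum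
  intro i _
  refine continuous_const.mul ((wNormSq_continuous pw).comp ?_)
  have h1 : Continuous fun z : PiLp 2 E × PiLp 2 E => blockMap M T' i z.1 :=
    (blockMap_continuous M T' hcont i).comp continuous_fst
  have h2 : Continuous fun z : PiLp 2 E × PiLp 2 E => blockMap M T' i z.2 :=
    (blockMap_continuous M T' hcont i).comp continuous_snd
  exact ((continuous_fst.sub h1).sub (continuous_snd.sub h2))

/-- `δ_z` is invariant when `z ∈ C`. -/
lemma dirac_invariant (M : I → Finset (Fin m)) (T' : ∀ j, PiLp 2 E → E j)
    (η : I → ℝ) (hη : ∀ i, 0 ≤ η i) (hηsum : ∑ i : I, η i = 1)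
    (hcont : ∀ j, Continuous (T' j))
    {z : PiLp 2 E} (hz : ∀ i, 0 < η i → blockMap M T' i z = z) :
    markovOp η (blockMap M T') (Measure.dirac z) = Measure.dirac z := by
  have htm : ∀ i, Measurable (blockMap M T' i) :=
    fun i => (blockMap_continuous M T' hcont i).measurable
  have : ∀ i : I, (ENNReal.ofReal (η i)) • (Measure.dirac z).map (blockMap M T' i)
      = (ENNReal.ofReal (η i)) • Measure.dirac z := by
    intro i
    rcases lt_or_eq_of_le (hη i) with hi | hi
    · rw [Measure.map_dirac' (htm i), hz i hi]
    · rw [← hi, ENNReal.ofReal_zero, zero_smul, zero_smul]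
  rw [markovOp]
  simp_rw [this]
  rw [← Finset.sum_smul, ← ENNReal.ofReal_sum_of_nonneg (fun i _ => hη i), hηsum,
    ENNReal.ofReal_one, one_smul]

lemma memP2_dirac (G : Set (PiLp 2 E)) (hG : IsCompact G) {z : PiLp 2 E} (hz : z ∈ G) :
    MemP2 G (Measure.dirac z) := by
  refine ⟨inferInstance, ?_, ?_⟩
  · rw [Measure.dirac_apply' z hG.isClosed.measurableSet.compl]
    simp [hz]
  · refine ⟨(continuous_norm.pow 2).aestronglyMeasurable,
      HasFiniteIntegral.of_bounded (C := ‖(‖z‖ ^ 2)‖) ?_⟩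
    rw [MeasureTheory.ae_dirac_eq]
    exact Filter.eventually_pure.2 le_rfl

lemma coupling_fst_ae {γ : Measure (PiLp 2 E × PiLp 2 E)} {ν : Measure (PiLp 2 E)}
    {x : PiLp 2 E} (hγ : IsCoupling γ (Measure.dirac x) ν) : ∀ᵐ z ∂γ, z.1 = x := by
  rw [ae_iff]
  have : {z : PiLp 2 E × PiLp 2 E | ¬ z.1 = x} = Prod.fst ⁻¹' {x}ᶜ := rfl
  rw [this, ← Measure.map_apply measurable_fst (measurableSet_singleton x).compl, hγ.2.1,
    Measure.dirac_apply' x (measurableSet_singleton x).compl]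
  simp

lemma coupling_snd_ae {γ : Measure (PiLp 2 E × PiLp 2 E)} {μ ν : Measure (PiLp 2 E)}
    (hγ : IsCoupling γ μ ν) {S : Set (PiLp 2 E)} (hS : MeasurableSet S) (hν : ν Sᶜ = 0) :
    ∀ᵐ z ∂γ, z.2 ∈ S := by
  rw [ae_iff]
  have : {z : PiLp 2 E × PiLp 2 E | ¬ z.2 ∈ S} = Prod.snd ⁻¹' Sᶜ := rfl
  rw [this, ← Measure.map_apply measurable_snd hS.compl, hγ.2.2]
  exact hν

lemma couplingCost_dirac_eq (pw : Fin m → ℝ) {γ : Measure (PiLp 2 E × PiLp 2 E)}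
    {ν : Measure (PiLp 2 E)} {x : PiLp 2 E} (hγ : IsCoupling γ (Measure.dirac x) ν) :
    couplingCost pw γ = Real.sqrt (∫ y, wNormSq pw (x - y) ∂ν) := by
  rw [couplingCost]
  congr 1
  have h1 : (fun z : PiLp 2 E × PiLp 2 E => wNormSq pw (z.1 - z.2))
      =ᵐ[γ] fun z => wNormSq pw (x - z.2) := by
    filter_upwards [coupling_fst_ae hγ] with z hz
    rw [hz]
  rw [integral_congr_ae h1, ← hγ.2.2]
  exact (integral_map (f := fun y => wNormSq pw (x - y)) measurable_snd.aemeasurable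
    (((wNormSq_continuous pw).comp (continuous_sub_left x)).aestronglyMeasurable)).symm

lemma dirac_prod_coupling (x z : PiLp 2 E) :
    IsCoupling (Measure.dirac (x, z)) (Measure.dirac x) (Measure.dirac z) := by
  refine ⟨inferInstance, ?_, ?_⟩
  · rw [Measure.map_dirac' measurable_fst]
  · rw [Measure.map_dirac' measurable_snd]

lemma prod_coupling (μ ν : Measure (PiLp 2 E)) [IsProbabilityMeasure μ]
    [IsProbabilityMeasure ν] : IsCoupling (μ.prod ν) μ ν := by
  refine ⟨inferInstance, ?_, ?_⟩
  · rw [Measure.map_fst_prod]; simp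
  · rw [Measure.map_snd_prod]; simp

lemma W2_nonneg (pw : Fin m → ℝ) (μ ν : Measure (PiLp 2 E)) : 0 ≤ W2 pw μ ν :=
  Real.sInf_nonneg fun r hr => by
    obtain ⟨γ, -, rfl⟩ := hr
    exact Real.sqrt_nonneg _

lemma W2_dirac_dirac (pw : Fin m → ℝ) (x z : PiLp 2 E) :
    W2 pw (Measure.dirac x) (Measure.dirac z) = wNorm pw (x - z) := by
  have hval : ∀ γ, IsCoupling γ (Measure.dirac x) (Measure.dirac z) →
      couplingCost pw γ = wNorm pw (x - z) := by
    intro γ hγ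
    rw [couplingCost_dirac_eq pw hγ, wNorm]
    congr 1
    exact integral_dirac _ z
  have hset : {r | ∃ γ, IsCoupling γ (Measure.dirac x) (Measure.dirac z) ∧
      r = couplingCost pw γ} = {wNorm pw (x - z)} := by
    ext r
    constructor
    · rintro ⟨γ, hγ, rfl⟩
      exact hval γ hγ
    · rintro rfl
      exact ⟨Measure.dirac (x, z), dirac_prod_coupling x z,
        (hval _ (dirac_prod_coupling x z)).symm⟩
  rw [W2, hset, csInf_singleton]

/-- Any continuous function is integrable w.r.t. a finite measure concentrated on a compact. -/
lemma integrable_of_conc {G : Set (PiLp 2 E)} (hG : IsCompact G) (hGne : G.Nonempty)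
    {π : Measure (PiLp 2 E)} [IsFiniteMeasure π] (hπG : π Gᶜ = 0)
    {f : PiLp 2 E → ℝ} (hf : Continuous f) : Integrable f π := by
  obtain ⟨x₀, -, hx₀⟩ := hG.exists_isMaxOn hGne (hf.norm.continuousOn)
  have hae : ∀ᵐ x ∂π, x ∈ G := by rw [ae_iff]; exact hπG
  refine ⟨hf.aestronglyMeasurable, HasFiniteIntegral.of_bounded (C := ‖f x₀‖) ?_⟩
  filter_upwards [hae] with x hx
  exact hx₀ hx

/-- Invariant measures in `𝒫₂(G)` are concentrated on `C`. -/
lemma invariant_conc_C (M : I → Finset (Fin m)) (T' : ∀ j, PiLp 2 E → E j)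
    (η : I → ℝ) (hη : ∀ i, 0 ≤ η i) (hηsum : ∑ i : I, η i = 1)
    (pw : Fin m → ℝ) (hp : ∀ j, 0 < pw j)
    (hcont : ∀ j, Continuous (T' j))
    (G : Set (PiLp 2 E)) (hG : IsCompact G)
    (hself : ∀ i, Set.MapsTo (blockMap M T' i) G G)
    (C : Set (PiLp 2 E))
    (hC : C = {x ∈ G | ∀ i, 0 < η i → blockMap M T' i x = x})
    (hCne : C.Nonempty)
    (hpara : ∀ y ∈ C, ∀ x ∈ G \ C,
      ∑ i : I, η i * wNormSq pw (blockMap M T' i x - y) < wNormSq pw (x - y))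
    (π : Measure (PiLp 2 E)) (hinv : markovOp η (blockMap M T') π = π)
    (hmem : MemP2 G π) : π Cᶜ = 0 := by
  obtain ⟨hprob, hπG, _⟩ := hmem
  obtain ⟨y₀, hy₀⟩ := hCne
  have hy₀G : y₀ ∈ G := by rw [hC] at hy₀; exact hy₀.1
  set T := blockMap M T' with hT
  have htc : ∀ i, Continuous (T i) := blockMap_continuous M T' hcont
  have htm : ∀ i, Measurable (T i) := fun i => (htc i).measurable
  set f : PiLp 2 E → ℝ := fun x => wNormSq pw (x - y₀) with hf
  have hfc : Continuous f := (wNormSq_continuous pw).comp (continuous_id.sub continuous_const)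
  have hfnn : ∀ x, 0 ≤ f x := fun x => wNormSq_nonneg pw hp _
  obtain ⟨x₀, -, hx₀'⟩ := hG.exists_isMaxOn ⟨y₀, hy₀G⟩ hfc.continuousOn
  have hx₀ : ∀ y ∈ G, f y ≤ f x₀ := fun y hy => hx₀' hy
  set B := f x₀ with hB
  have hae : ∀ᵐ x ∂π, x ∈ G := by
    rw [ae_iff]; exact hπG
  have hintf : Integrable f π := by
    refine ⟨hfc.aestronglyMeasurable, HasFiniteIntegral.of_bounded (C := B) ?_⟩
    filter_upwards [hae] with x hx
    rw [Real.norm_of_nonneg (hfnn x)]; exact hx₀ x hx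
  have hintfT : ∀ i, Integrable (fun x => f (T i x)) π := by
    intro i
    refine ⟨(hfc.comp (htc i)).aestronglyMeasurable,
      HasFiniteIntegral.of_bounded (C := B) ?_⟩
    filter_upwards [hae] with x hx
    rw [Real.norm_of_nonneg (hfnn _)]; exact hx₀ _ (hself i hx)
  have hkey : ∫ x, f x ∂π = ∑ i : I, η i * ∫ x, f (T i x) ∂π := by
    conv_lhs => rw [← hinv]
    rw [markovOp, integral_finset_sum_measure (fun i _ => ?_)]
    · refine Finset.sum_congr rfl fun i _ => ?_
      rw [integral_smul_measure,
        integral_map (htm i).aemeasurable hfc.aestronglyMeasurable,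
        ENNReal.toReal_ofReal (hη i), smul_eq_mul]
    · refine Integrable.smul_measure ?_ ENNReal.ofReal_ne_top
      exact (integrable_map_measure hfc.aestronglyMeasurable (htm i).aemeasurable).2 (hintfT i)
  set g : PiLp 2 E → ℝ := fun x => f x - ∑ i : I, η i * f (T i x) with hg
  have hintsum : Integrable (fun x => ∑ i : I, η i * f (T i x)) π :=
    integrable_finset_sum _ fun i _ => (hintfT i).const_mul (η i)
  have hintg : Integrable g π := hintf.sub hintsum
  have hg_zero_on_C : ∀ x ∈ C, g x = 0 := by
    intro x hx
    have hxfix : ∀ i, 0 < η i → T i x = x := by rw [hC] at hx; exact hx.2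
    have : ∑ i : I, η i * f (T i x) = ∑ i : I, η i * f x := by
      refine Finset.sum_congr rfl fun i _ => ?_
      rcases lt_or_eq_of_le (hη i) with hi | hi
      · rw [hxfix i hi]
      · rw [← hi, zero_mul, zero_mul]
    simp only [hg, this, ← Finset.sum_mul, hηsum, one_mul, sub_self]
  have hg_pos : ∀ x ∈ G \ C, 0 < g x := fun x hx =>
    sub_pos.2 (hpara y₀ hy₀ x hx)
  have hg_nonneg : 0 ≤ᵐ[π] g := by
    filter_upwards [hae] with x hx
    by_cases hxC : x ∈ C
    · exact (hg_zero_on_C x hxC).ge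
    · exact (hg_pos x ⟨hx, hxC⟩).le
  have hintg_zero : ∫ x, g x ∂π = 0 := by
    rw [hg]
    rw [integral_sub hintf hintsum, integral_finset_sum _ (fun i _ => (hintfT i).const_mul (η i))]
    simp_rw [integral_const_mul]
    rw [hkey, sub_self]
  have hgae : g =ᵐ[π] 0 := (integral_eq_zero_iff_of_nonneg_ae hg_nonneg hintg).1 hintg_zero
  have hnull : π {x | g x ≠ 0} = 0 := by
    rw [Filter.EventuallyEq, ae_iff] at hgae
    simpa using hgae
  have hsub : Cᶜ ⊆ {x | g x ≠ 0} ∪ Gᶜ := by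
    intro x hx
    by_cases hxG : x ∈ G
    · exact Or.inl (ne_of_gt (hg_pos x ⟨hxG, hx⟩))
    · exact Or.inr hxG
  refine le_antisymm ?_ (zero_le)
  calc π Cᶜ ≤ π ({x | g x ≠ 0} ∪ Gᶜ) := measure_mono hsub
    _ ≤ π {x | g x ≠ 0} + π Gᶜ := measure_union_le _ _
    _ = 0 := by rw [hnull, hπG, add_zero]

/-- The fundamental algebraic identity. -/
lemma sum_wNormSq_eq (M : I → Finset (Fin m)) (T' : ∀ j, PiLp 2 E → E j)
    (i₁ : I) (hi₁ : M i₁ = Finset.univ)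
    (η : I → ℝ)
    (pw : Fin m → ℝ) (hpw : ∀ j, pw j = ∑ i : I, if j ∈ M i then η i else 0)
    (hp : ∀ j, 0 < pw j) (x : PiLp 2 E) :
    ∑ i : I, η i * wNormSq pw (x - blockMap M T' i x)
      = ‖x - blockMap M T' i₁ x‖ ^ 2 := by
  have key : ∀ (i : I) (j : Fin m), (pw j)⁻¹ * ‖(x - blockMap M T' i x) j‖ ^ 2
      = if j ∈ M i then (pw j)⁻¹ * ‖x j - T' j x‖ ^ 2 else 0 := by
    intro i j
    by_cases h : j ∈ M i <;>
      simp [PiLp.sub_apply, blockMap, h, sub_self]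
  calc ∑ i : I, η i * wNormSq pw (x - blockMap M T' i x)
      = ∑ i : I, ∑ j, (if j ∈ M i then η i else 0) * ((pw j)⁻¹ * ‖x j - T' j x‖ ^ 2) := by
        refine Finset.sum_congr rfl fun i _ => ?_
        rw [wNormSq, Finset.mul_sum]
        refine Finset.sum_congr rfl fun j _ => ?_
        rw [key i j]
        by_cases h : j ∈ M i <;> simp [h]
    _ = ∑ j, (∑ i : I, if j ∈ M i then η i else 0) * ((pw j)⁻¹ * ‖x j - T' j x‖ ^ 2) := by
        rw [Finset.sum_comm]
        exact Finset.sum_congr rfl fun j _ => (Finset.sum_mul _ _ _).symm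
    _ = ∑ j, ‖x j - T' j x‖ ^ 2 := by
        refine Finset.sum_congr rfl fun j _ => ?_
        rw [← hpw j, ← mul_assoc, mul_inv_cancel₀ (hp j).ne', one_mul]
    _ = ‖x - blockMap M T' i₁ x‖ ^ 2 := by
        rw [PiLp.norm_sq_eq_of_L2]
        refine (Finset.sum_congr rfl fun j _ => ?_).symm
        have hj : j ∈ M i₁ := by rw [hi₁]; exact Finset.mem_univ j
        simp [PiLp.sub_apply, blockMap, hj]

/-- The discrepancy at a point `(x, y)` with `y ∈ C`. -/
lemma discrep_at (M : I → Finset (Fin m)) (T' : ∀ j, PiLp 2 E → E j)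
    (η : I → ℝ) (hη : ∀ i, 0 ≤ η i) (pw : Fin m → ℝ)
    (z : PiLp 2 E × PiLp 2 E) (hy : ∀ i, 0 < η i → blockMap M T' i z.2 = z.2) :
    discrep pw η (blockMap M T') z
      = ∑ i : I, η i * wNormSq pw (z.1 - blockMap M T' i z.1) := by
  rw [discrep]
  refine Finset.sum_congr rfl fun i _ => ?_
  rcases lt_or_eq_of_le (hη i) with hi | hi
  · rw [hy i hi, sub_self, sub_zero]
  · rw [← hi, zero_mul, zero_mul]

end Aux

/-- pointwise formulas for the invariant Markov transport discrepancy and the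
distance to the invariant measures in the consistent paracontractive case. -/
theorem statement8
    (M : I → Finset (Fin m)) (hM : ∀ i, (M i).Nonempty)
    (i₁ : I) (hi₁ : M i₁ = Finset.univ)
    (η : I → ℝ) (hη : ∀ i, 0 ≤ η i) (hηsum : ∑ i : I, η i = 1)
    (pw : Fin m → ℝ) (hpw : ∀ j, pw j = ∑ i : I, if j ∈ M i then η i else 0)
    (hp : ∀ j, 0 < pw j)
    (pbar : ℝ) (hpbar : IsGreatest (Set.range pw) pbar)
    (T' : ∀ j, PiLp 2 E → E j) (hcont : ∀ j, Continuous (T' j))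
    (G : Set (PiLp 2 E)) (hG : IsCompact G)
    (hself : ∀ i, Set.MapsTo (blockMap M T' i) G G)
    (C : Set (PiLp 2 E))
    (hC : C = {x ∈ G | ∀ i, 0 < η i → blockMap M T' i x = x})
    (hCne : C.Nonempty)
    (hpara : ∀ y ∈ C, ∀ x ∈ G \ C,
      ∑ i : I, η i * wNormSq pw (blockMap M T' i x - y) < wNormSq pw (x - y)) :
    ∀ x ∈ G,
      Psi pw η (blockMap M T') G (Measure.dirac x) = ‖x - blockMap M T' i₁ x‖
      ∧ (1 / Real.sqrt pbar) * sInf ((fun z => ‖x - z‖) '' C)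
          ≤ sInf ((fun z => wNorm pw (x - z)) '' C)
      ∧ sInf ((fun z => wNorm pw (x - z)) '' C)
          = dInv pw η (blockMap M T') G (Measure.dirac x) := by
  classical
  have hclosed : IsClosed C := C_closed M T' η G C hcont hG hC
  have hCsubG : C ⊆ G := by rw [hC]; exact fun z hz => hz.1
  obtain ⟨y₀, hy₀⟩ := hCne
  have hy₀G : y₀ ∈ G := hCsubG hy₀
  have hy₀fix : ∀ i, 0 < η i → blockMap M T' i y₀ = y₀ := by rw [hC] at hy₀; exact hy₀.2
  have hGne : G.Nonempty := ⟨y₀, hy₀G⟩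
  have hinvy₀ : markovOp η (blockMap M T') (Measure.dirac y₀) = Measure.dirac y₀ :=
    dirac_invariant M T' η hη hηsum hcont hy₀fix
  have hmemy₀ : MemP2 G (Measure.dirac y₀) := memP2_dirac G hG hy₀G
  intro x hx
  -- optimality of the coupling `δ_(x,z)` for `z ∈ C`
  have hoptd : ∀ z : PiLp 2 E, IsOptimalCoupling pw (Measure.dirac (x, z))
      (Measure.dirac x) (Measure.dirac z) := by
    intro z
    refine ⟨dirac_prod_coupling x z, ?_⟩
    rw [W2_dirac_dirac, couplingCost_dirac_eq pw (dirac_prod_coupling x z),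
      integral_dirac, wNorm]
  refine ⟨?_, ?_, ?_⟩
  · -- Part 1 : the value of Ψ at δ_x
    have hcsq : ∑ i : I, η i * wNormSq pw (x - blockMap M T' i x)
        = ‖x - blockMap M T' i₁ x‖ ^ 2 := sum_wNormSq_eq M T' i₁ hi₁ η pw hpw hp x
    have hval : ∀ π γ, markovOp η (blockMap M T') π = π → MemP2 G π →
        IsOptimalCoupling pw γ (Measure.dirac x) π →
        Real.sqrt (∫ z, discrep pw η (blockMap M T') z ∂γ)
          = ‖x - blockMap M T' i₁ x‖ := by
      intro π γ hinv hmem hopt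
      have hcoup := hopt.1
      haveI := hcoup.1
      have hπC : π Cᶜ = 0 := invariant_conc_C M T' η hη hηsum pw hp hcont G hG hself C hC
        ⟨y₀, hy₀⟩ hpara π hinv hmem
      have h1 := coupling_fst_ae hcoup
      have h2 := coupling_snd_ae hcoup hclosed.measurableSet hπC
      have hae : (discrep pw η (blockMap M T'))
          =ᵐ[γ] fun _ => ‖x - blockMap M T' i₁ x‖ ^ 2 := by
        filter_upwards [h1, h2] with z hz1 hz2
        have hz2' : ∀ i, 0 < η i → blockMap M T' i z.2 = z.2 := by
          rw [hC] at hz2; exact hz2.2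
        rw [discrep_at M T' η hη pw z hz2', hz1, hcsq]
      rw [integral_congr_ae hae, integral_const, probReal_univ, one_smul,
        Real.sqrt_sq (norm_nonneg _)]
    have hSset : {r | ∃ π γ, markovOp η (blockMap M T') π = π ∧ MemP2 G π ∧
        IsOptimalCoupling pw γ (Measure.dirac x) π ∧
        r = Real.sqrt (∫ z, discrep pw η (blockMap M T') z ∂γ)}
          = {‖x - blockMap M T' i₁ x‖} := by
      ext r
      simp only [Set.mem_setOf_eq, Set.mem_singleton_iff]
      constructor
      · rintro ⟨π, γ, hinv, hmem, hopt, rfl⟩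
        exact hval π γ hinv hmem hopt
      · rintro rfl
        exact ⟨Measure.dirac y₀, Measure.dirac (x, y₀), hinvy₀, hmemy₀, hoptd y₀,
          (hval _ _ hinvy₀ hmemy₀ (hoptd y₀)).symm⟩
    rw [Psi, hSset, csInf_singleton]
  · -- Part 2 : the norm comparison inequality
    have hpb := pbar_pos pw hp hpbar
    refine le_csInf ((Set.Nonempty.image _ ⟨y₀, hy₀⟩)) ?_
    rintro b ⟨z, hz, rfl⟩
    have h1 : sInf ((fun z => ‖x - z‖) '' C) ≤ ‖x - z‖ :=
      csInf_le ⟨0, by rintro r ⟨w, hw, rfl⟩; exact norm_nonneg _⟩ ⟨z, hz, rfl⟩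
    have h2 : (1 / Real.sqrt pbar) * ‖x - z‖ ≤ wNorm pw (x - z) := by
      rw [wNorm, Real.le_sqrt (by positivity) (wNormSq_nonneg pw hp _), mul_pow,
        one_div, inv_pow, Real.sq_sqrt hpb.le]
      rw [inv_mul_le_iff₀ hpb]
      exact norm_sq_le_pbar_mul pw hp hpbar (x - z)
    calc (1 / Real.sqrt pbar) * sInf ((fun z => ‖x - z‖) '' C)
        ≤ (1 / Real.sqrt pbar) * ‖x - z‖ :=
          mul_le_mul_of_nonneg_left h1 (by positivity)
      _ ≤ wNorm pw (x - z) := h2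
  · -- Part 3 : the distance to the invariant measures
    have hBne : ((fun z => wNorm pw (x - z)) '' C).Nonempty := (Set.Nonempty.image _ ⟨y₀, hy₀⟩)
    have hBbb : BddBelow ((fun z => wNorm pw (x - z)) '' C) :=
      ⟨0, by rintro r ⟨w, hw, rfl⟩; exact wNorm_nonneg pw _⟩
    have hc'0 : 0 ≤ sInf ((fun z => wNorm pw (x - z)) '' C) :=
      le_csInf hBne (by rintro r ⟨w, hw, rfl⟩; exact wNorm_nonneg pw _)
    have hc'le : ∀ z ∈ C, sInf ((fun z => wNorm pw (x - z)) '' C) ≤ wNorm pw (x - z) :=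
      fun z hz => csInf_le hBbb ⟨z, hz, rfl⟩
    have hDne : {r | ∃ π, markovOp η (blockMap M T') π = π ∧ MemP2 G π ∧
        r = W2 pw (Measure.dirac x) π}.Nonempty :=
      ⟨W2 pw (Measure.dirac x) (Measure.dirac y₀), Measure.dirac y₀, hinvy₀, hmemy₀, rfl⟩
    have hDbb : BddBelow {r | ∃ π, markovOp η (blockMap M T') π = π ∧ MemP2 G π ∧
        r = W2 pw (Measure.dirac x) π} := by
      refine ⟨0, ?_⟩
      rintro r ⟨π, -, -, rfl⟩
      exact W2_nonneg pw _ _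
    have hDlb : ∀ r ∈ {r | ∃ π, markovOp η (blockMap M T') π = π ∧ MemP2 G π ∧
        r = W2 pw (Measure.dirac x) π}, sInf ((fun z => wNorm pw (x - z)) '' C) ≤ r := by
      rintro r ⟨π, hinv, hmem, rfl⟩
      haveI := hmem.1
      have hπC : π Cᶜ = 0 := invariant_conc_C M T' η hη hηsum pw hp hcont G hG hself C hC
        ⟨y₀, hy₀⟩ hpara π hinv hmem
      refine le_csInf ⟨couplingCost pw ((Measure.dirac x).prod π),
        (Measure.dirac x).prod π, prod_coupling _ _, rfl⟩ ?_
      rintro r' ⟨γ, hγ, rfl⟩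
      rw [couplingCost_dirac_eq pw hγ]
      have hint : Integrable (fun y => wNormSq pw (x - y)) π :=
        integrable_of_conc hG hGne hmem.2.1
          ((wNormSq_continuous pw).comp (continuous_const.sub continuous_id))
      have haeC : ∀ᵐ y ∂π, y ∈ C := by rw [ae_iff]; exact hπC
      have hmono : sInf ((fun z => wNorm pw (x - z)) '' C) ^ 2
          ≤ ∫ y, wNormSq pw (x - y) ∂π := by
        have h0 : ∫ (_ : PiLp 2 E), sInf ((fun z => wNorm pw (x - z)) '' C) ^ 2 ∂π
            = sInf ((fun z => wNorm pw (x - z)) '' C) ^ 2 := by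
          rw [integral_const, probReal_univ, one_smul]
        rw [← h0]
        refine integral_mono_ae (integrable_const _) hint ?_
        filter_upwards [haeC] with y hy
        calc sInf ((fun z => wNorm pw (x - z)) '' C) ^ 2
            ≤ (wNorm pw (x - y)) ^ 2 := pow_le_pow_left₀ hc'0 (hc'le y hy) 2
          _ = wNormSq pw (x - y) := Real.sq_sqrt (wNormSq_nonneg pw hp _)
      calc sInf ((fun z => wNorm pw (x - z)) '' C)
          = Real.sqrt (sInf ((fun z => wNorm pw (x - z)) '' C) ^ 2) :=
            (Real.sqrt_sq hc'0).symm
        _ ≤ Real.sqrt (∫ y, wNormSq pw (x - y) ∂π) := Real.sqrt_le_sqrt hmono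
    rw [dInv]
    refine le_antisymm (le_csInf hDne hDlb) ?_
    refine le_csInf hBne ?_
    rintro b ⟨z, hz, rfl⟩
    have hzfix : ∀ i, 0 < η i → blockMap M T' i z = z := by rw [hC] at hz; exact hz.2
    have hmemD : W2 pw (Measure.dirac x) (Measure.dirac z) ∈
        {r | ∃ π, markovOp η (blockMap M T') π = π ∧ MemP2 G π ∧
          r = W2 pw (Measure.dirac x) π} :=
      ⟨Measure.dirac z, dirac_invariant M T' η hη hηsum hcont hzfix,
        memP2_dirac G hG (hCsubG hz), rfl⟩
    have := csInf_le hDbb hmemD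
    rwa [W2_dirac_dirac] at this
end
end
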